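/- arXiv:1704.06624 — 2 statements merged into one kernel-verified Lean document; each statement's English description precedes it below -/
import Mathlib

section
/- Let f : [a,b] → [a,b] be a unimodal map with turning point c satisfying the standing convention, whose kneading sequence has height q(κ(f)) = m/n ∈ (0,1/2) (m/n in lowest terms), and suppose (w_{m/n}0)^∞ ≺ κ(f) ⪯ w_{m/n}0(w_{m/n}1)^∞ in the unimodal order. Then f^n(a) ≤ c, the image f^n([a, f^n(a))) equals [a, f^n(a)], and the image f^{n−1}([f(a), f^{n+1}(a)]) equals [a, f^n(a)]. -/
open Set

/-- Binary sequences. -/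
abbrev Bseq := ℕ → Fin 2

/-- The strict unimodal order on binary sequences: `α ≺ β` iff at the least index `r` where
they differ, the sum `∑_{i=0}^r α_i` is even. -/
def umLT (α β : Bseq) : Prop :=
  ∃ r : ℕ, (∀ i, i < r → α i = β i) ∧ α r ≠ β r ∧
    Even (∑ i ∈ Finset.range (r + 1), ((α i : ℕ)))

/-- `α ⪯ β` in the unimodal order. -/
def umLE (α β : Bseq) : Prop := umLT α β ∨ α = β

/-- The `r`-fold shift `σ^r`. -/
def shiftSeq (r : ℕ) (α : Bseq) : Bseq := fun i => α (i + r)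

/-- A sequence is maximal if all its shifts are `⪯` it. -/
def MaximalSeq (α : Bseq) : Prop := ∀ r : ℕ, umLE (shiftSeq r α) α

/-- Membership in `KS`: maximal sequences whose first two symbols are `10`. -/
def KSseq (α : Bseq) : Prop := MaximalSeq α ∧ α 0 = 1 ∧ α 1 = 0

/-- A (purely) periodic sequence. -/
def PeriodicSeq (α : Bseq) : Prop := ∃ p : ℕ, 0 < p ∧ ∀ i, α (i + p) = α i

/-- The periodic sequence `W^∞` determined by a finite word `W`. -/
def perSeq (W : List (Fin 2)) : Bseq := fun i => W.getD (i % W.length) 0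

/-- The sequence `V W^∞`. -/
def preperSeq (V W : List (Fin 2)) : Bseq :=
  fun i => if i < V.length then V.getD i 0 else perSeq W (i - V.length)

/-- The sequence `10 1^∞`. -/
def seq101 : Bseq := fun i => if i = 1 then 0 else 1

/-- The sequence `1σ²(α)`: `1` followed by `α₂ α₃ ⋯`. -/
def oneShift2 (α : Bseq) : Bseq := fun i => if i = 0 then 1 else α (i + 1)

/-- `κ_i(q)`: `κ_1(q) = ⌊1/q⌋ - 1`, and `κ_i(q) = ⌊i/q⌋ - ⌊(i-1)/q⌋ - 2` for `i ≥ 2`. -/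
noncomputable def kap (q : ℝ) (i : ℕ) : ℕ :=
  if i = 1 then (⌊1 / q⌋ - 1).toNat
  else (⌊(i : ℝ) / q⌋ - ⌊((i : ℝ) - 1) / q⌋ - 2).toNat

/-- The word `1 0^{κ_j(q)} 11 0^{κ_{j+1}(q)} 11 ⋯ 11 0^{κ_{j+M}(q)}`: an initial block
indexed `j` followed by `M` further blocks. -/
noncomputable def tailBody (q : ℝ) (j M : ℕ) : List (Fin 2) :=
  1 :: (List.replicate (kap q j) 0 ++
    (((List.range M).map fun t => 1 :: 1 :: List.replicate (kap q (j + 1 + t)) 0).flatten))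

/-- The word `c_q = 1 0^{κ_1(q)} 11 0^{κ_2(q)} 11 ⋯ 11 0^{κ_m(q)} 1`. -/
noncomputable def cqWord (q : ℝ) (m : ℕ) : List (Fin 2) := tailBody q 1 (m - 1) ++ [1]

/-- The word `w_q`, obtained from `c_q` by deleting its last two symbols. -/
noncomputable def wqWord (q : ℝ) (m : ℕ) : List (Fin 2) := (cqWord q m).dropLast.dropLast

/-- The word `ŵ_q`, the reverse of `w_q`. -/
noncomputable def hwqWord (q : ℝ) (m : ℕ) : List (Fin 2) := (wqWord q m).reverse

/-- The finite word `1 0^{κ_j(q)} 11 0^{κ_{j+1}(q)} ⋯ 11 0^{κ_m(q)} 1`. -/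
noncomputable def tailWord (q : ℝ) (j m : ℕ) : List (Fin 2) := tailBody q j (m - j) ++ [1]

/-- The word `1 0^{κ_1(q)-1} 11 0^{κ_2(q)} 11 ⋯` with `M` blocks after the first
(no closing `1`). -/
noncomputable def lowBody (q : ℝ) (M : ℕ) : List (Fin 2) :=
  1 :: (List.replicate (kap q 1 - 1) 0 ++
    (((List.range M).map fun t => 1 :: 1 :: List.replicate (kap q (2 + t)) 0).flatten))

/-- The finite word `1 0^{κ_1(q)-1} 11 0^{κ_2(q)} ⋯ 11 0^{κ_m(q)} 1`. -/
noncomputable def lowWord (q : ℝ) (m : ℕ) : List (Fin 2) := lowBody q (m - 1) ++ [1]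

/-- The infinite sequence `1 0^{κ_j(q)} 11 0^{κ_{j+1}(q)} 11 0^{κ_{j+2}(q)} 11 ⋯`. -/
noncomputable def tailSeq (q : ℝ) (j : ℕ) : Bseq := fun i => (tailBody q j (i + 1)).getD i 0

/-- The infinite sequence `1 0^{κ_1(q)-1} 11 0^{κ_2(q)} 11 0^{κ_3(q)} 11 ⋯`. -/
noncomputable def lowSeq (q : ℝ) : Bseq := fun i => (lowBody q (i + 1)).getD i 0

/-- The height `q(α) = inf({q ∈ (0,1/2] ∩ ℚ : (c_q0)^∞ ≺ α} ∪ {1/2})`. -/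
noncomputable def height (α : Bseq) : ℝ :=
  sInf ({x : ℝ | ∃ q : ℚ, x = (q : ℝ) ∧ 0 < q ∧ q ≤ 1 / 2 ∧
    umLT (perSeq (cqWord (q : ℝ) q.num.toNat ++ [0])) α} ∪ {1 / 2})

/-- A unimodal map `f : [a,b] → [a,b]` with turning point `c`. -/
structure Unimodal (a b c : ℝ) (f : ℝ → ℝ) : Prop where
  a_lt_b : a < b
  c_mem : c ∈ Ioo a b
  cont : ContinuousOn f (Icc a b)
  maps : MapsTo f (Icc a b) (Icc a b)
  mono : StrictMonoOn f (Icc a c)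
  anti : StrictAntiOn f (Icc c b)
  map_c : f c = b
  map_b : f b = a

/-- `α` is an itinerary of `x` under the unimodal map `f` with turning point `c`. -/
def IsItin (f : ℝ → ℝ) (a b c x : ℝ) (α : Bseq) : Prop :=
  ∀ r : ℕ, (α r = 0 → f^[r] x ∈ Icc a c) ∧ (α r = 1 → f^[r] x ∈ Icc c b)

/-- `κ` is the kneading sequence of `f`: the itinerary of `b` smallest in the unimodal order. -/
def IsKneading (f : ℝ → ℝ) (a b c : ℝ) (κ : Bseq) : Prop :=
  IsItin f a b c b κ ∧ ∀ β : Bseq, IsItin f a b c b β → umLE κ β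

/-- The standing convention on unimodal maps. -/
structure Convention (f : ℝ → ℝ) (a b c : ℝ) (κ : Bseq) : Prop where
  kneading : IsKneading f a b c κ
  gt101 : umLT seq101 κ
  itin_inj : ¬ PeriodicSeq κ → ∀ x ∈ Icc a b, ∀ y ∈ Icc a b, ∀ α : Bseq,
      IsItin f a b c x α → IsItin f a b c y α → x = y
  two_fixed : ∀ n : ℕ, 0 < n → ∀ μ : Bseq,
      {x | x ∈ Icc a b ∧ f^[n] x = x ∧ IsItin f a b c x μ}.encard ≤ 2 ∧
      ∀ x ∈ {x | x ∈ Icc a b ∧ f^[n] x = x ∧ IsItin f a b c x μ},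
        ∀ y ∈ {x | x ∈ Icc a b ∧ f^[n] x = x ∧ IsItin f a b c x μ},
          x ≠ y → ∃ r : ℕ, κ = shiftSeq r μ

section
open Finset
section AUX1
variable {α β : Bseq}

lemma fin2_cases (s : Fin 2) : s = 0 ∨ s = 1 := by
  rcases s with ⟨v, hv⟩
  interval_cases v
  · exact Or.inl rfl
  · exact Or.inr rfl

lemma fin2_add_eq_one {x y : Fin 2} (h : x ≠ y) : (x : ℕ) + (y : ℕ) = 1 := by
  rcases fin2_cases x with hx | hx <;> rcases fin2_cases y with hy | hy <;>
    subst hx <;> subst hy <;> simp_all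

lemma sum_split (g : ℕ → ℕ) (k l : ℕ) :
    ∑ i ∈ range (k + l), g i = (∑ i ∈ range k, g i) + ∑ i ∈ range l, g (k + i) := by
  induction l with
  | zero => simp
  | succ l ih =>
      rw [show k + (l+1) = (k + l) + 1 by omega, Finset.sum_range_succ, ih,
        Finset.sum_range_succ]
      omega

lemma sum_list_range (g : ℕ → ℕ) (M : ℕ) :
    ((List.range M).map g).sum = ∑ i ∈ range M, g i := by
  induction M with
  | zero => simp
  | succ M ih => rw [List.range_succ]; simp [ih, Finset.sum_range_succ]

lemma sum_getD (l : List (Fin 2)) :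
    ∑ i ∈ range l.length, ((l.getD i 0 : ℕ)) = (l.map (fun s : Fin 2 => (s : ℕ))).sum := by
  induction l with
  | nil => simp
  | cons x t ih =>
      rw [List.length_cons, Finset.sum_range_succ']
      simp only [List.getD_cons_succ, List.getD_cons_zero, ih]
      simp [Nat.add_comm]

lemma sum_window {L : Bseq} {n : ℕ} (hper : ∀ i, L (i + n) = L i) :
    ∀ k, ∑ i ∈ range n, ((L (k + i) : ℕ)) = ∑ i ∈ range n, ((L i : ℕ)) := by
  intro k; induction k with
  | zero => simp
  | succ k ih =>
      have e1 := Finset.sum_range_succ' (fun i => ((L (k + i) : ℕ))) n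
      have e2 := Finset.sum_range_succ (fun i => ((L (k + i) : ℕ))) n
      have e3 : L (k + n) = L k := hper k
      have e4 : ∑ i ∈ range n, ((L (k + 1 + i) : ℕ)) = ∑ i ∈ range n, ((L (k + (i+1)) : ℕ)) := by
        apply Finset.sum_congr rfl; intro i _; rw [show k + 1 + i = k + (i+1) by omega]
      have e5 : L (k+0) = L k := by rw [Nat.add_zero]
      rw [e4]; rw [e3, ← e5] at e2; omega

lemma umLT_parity_lemma {r : ℕ} (hag : ∀ i < r, α i = β i) (hne : α r ≠ β r) :
    (∑ i ∈ range (r+1), ((α i : ℕ))) % 2 ≠ (∑ i ∈ range (r+1), ((β i : ℕ))) % 2 := by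
  rw [Finset.sum_range_succ, Finset.sum_range_succ]
  have h1 : ∑ i ∈ range r, ((α i : ℕ)) = ∑ i ∈ range r, ((β i : ℕ)) :=
    Finset.sum_congr rfl (fun i hi => by rw [hag i (Finset.mem_range.1 hi)])
  have h2 := fin2_add_eq_one hne
  omega

lemma umLT_even_at {r : ℕ} (h : umLT α β) (hag : ∀ i < r, α i = β i) (hne : α r ≠ β r) :
    Even (∑ i ∈ range (r+1), ((α i : ℕ))) := by
  obtain ⟨s, hs1, hs2, hs3⟩ := h
  have hsr : s = r := by
    rcases lt_trichotomy s r with h' | h' | h'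
    · exact absurd (hag s h') hs2
    · exact h'
    · exact absurd (hs1 r h') hne
  subst hsr; exact hs3

lemma umLT_asymm (h1 : umLT α β) (h2 : umLT β α) : False := by
  obtain ⟨s, hs1, hs2, hs3⟩ := h1
  have h4 : Even (∑ i ∈ range (s+1), ((β i : ℕ))) :=
    umLT_even_at h2 (fun i hi => (hs1 i hi).symm) (Ne.symm hs2)
  have h5 := umLT_parity_lemma hs1 hs2
  rw [Nat.even_iff] at hs3 h4; omega

lemma umLT_irrefl (γ : Bseq) : ¬ umLT γ γ := fun ⟨_, _, hne, _⟩ => hne rfl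

lemma prefix_force {L U κ : Bseq} (hL : umLT L κ) (hU : umLE κ U) {N : ℕ}
    (hag : ∀ i < N, L i = U i) : ∀ i < N, κ i = L i := by
  intro i
  induction i using Nat.strong_induction_on with
  | _ i IH =>
    intro hi
    by_contra hne
    have hagL : ∀ j < i, L j = κ j := fun j hj => (IH j hj (lt_trans hj hi)).symm
    have hneL : L i ≠ κ i := fun h => hne h.symm
    have hevL := umLT_even_at hL hagL hneL
    rcases hU with hU' | hU'
    · have hagU : ∀ j < i, κ j = U j := fun j hj => by
        rw [IH j hj (lt_trans hj hi), hag j (lt_trans hj hi)]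
      have hneU : κ i ≠ U i := by rw [← hag i hi]; exact hne
      have hevK := umLT_even_at hU' hagU hneU
      have h5 := umLT_parity_lemma hagL hneL
      rw [Nat.even_iff] at hevL hevK; omega
    · rw [hU'] at hne; exact hne (hag i hi).symm

end AUX1

end
section
open Finset
variable {a b c : ℝ} {f : ℝ → ℝ}

lemma iter_mem (hU : Unimodal a b c f) {x : ℝ} (hx : x ∈ Set.Icc a b) (k : ℕ) :
    f^[k] x ∈ Set.Icc a b := by
  induction k with
  | zero => simpa
  | succ k ih => rw [Function.iterate_succ_apply']; exact hU.maps ih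

lemma isItin_shift {x : ℝ} {α : Bseq} (h : IsItin f a b c x α) (k : ℕ) :
    IsItin f a b c (f^[k] x) (shiftSeq k α) := by
  intro r
  constructor <;> intro hr <;> rw [← Function.iterate_add_apply]
  · exact (h (r + k)).1 hr
  · exact (h (r + k)).2 hr

lemma itin_lt (hU : Unimodal a b c f) :
    ∀ r : ℕ, ∀ x y : ℝ, ∀ α β : Bseq, x < y →
      IsItin f a b c x α → IsItin f a b c y β →
      (∀ i < r, α i = β i) → α r ≠ β r → umLT α β := by
  intro r
  induction r with
  | zero =>
      intro x y α β hxy hα hβ _ hne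
      rcases fin2_cases (α 0) with h0 | h0
      · exact ⟨0, fun i hi => absurd hi (Nat.not_lt_zero i), hne, by simp [h0]⟩
      · have hβ0 : β 0 = 0 := by
          rcases fin2_cases (β 0) with h' | h'
          · exact h'
          · rw [h0, h'] at hne; exact absurd rfl hne
        have hx := (hα 0).2 h0
        have hy := (hβ 0).1 hβ0
        simp only [Function.iterate_zero_apply] at hx hy
        exact absurd hxy (not_lt.2 (le_trans hy.2 hx.1))
  | succ r ih =>
      intro x y α β hxy hα hβ hag hne
      have h00 : α 0 = β 0 := hag 0 (Nat.succ_pos r)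
      have hsx : IsItin f a b c (f^[1] x) (shiftSeq 1 α) := isItin_shift hα 1
      have hsy : IsItin f a b c (f^[1] y) (shiftSeq 1 β) := isItin_shift hβ 1
      rw [Function.iterate_one] at hsx hsy
      have hagS : ∀ i < r, shiftSeq 1 α i = shiftSeq 1 β i := fun i hi =>
        hag (i + 1) (by omega)
      have hneS : shiftSeq 1 α r ≠ shiftSeq 1 β r := hne
      rcases fin2_cases (α 0) with h0 | h0
      · have hx := (hα 0).1 h0
        have hy := (hβ 0).1 (h00 ▸ h0)
        simp only [Function.iterate_zero_apply] at hx hy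
        have hfxy : f x < f y := hU.mono hx hy hxy
        have hm := ih (f x) (f y) _ _ hfxy hsx hsy hagS hneS
        have hev := umLT_even_at hm hagS hneS
        refine ⟨r + 1, hag, hne, ?_⟩
        have e1 := Finset.sum_range_succ' (fun i => ((α i : ℕ))) (r + 1)
        have hv0 : ((α 0 : ℕ)) = 0 := by rw [h0]; rfl
        have : ∑ i ∈ range (r+1), ((shiftSeq 1 α i : ℕ)) =
            ∑ i ∈ range (r+1), ((α (i+1) : ℕ)) := rfl
        rw [this] at hev
        rw [Nat.even_iff] at hev ⊢
        omega
      · have hx := (hα 0).2 h0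
        have hy := (hβ 0).2 (h00 ▸ h0)
        simp only [Function.iterate_zero_apply] at hx hy
        have hfxy : f y < f x := hU.anti hx hy hxy
        have hm := ih (f y) (f x) _ _ hfxy hsy hsx
          (fun i hi => (hagS i hi).symm) (Ne.symm hneS)
        have hev := umLT_even_at hm (fun i hi => (hagS i hi).symm) (Ne.symm hneS)
        have hpar := umLT_parity_lemma hagS hneS
        refine ⟨r + 1, hag, hne, ?_⟩
        have e1 := Finset.sum_range_succ' (fun i => ((α i : ℕ))) (r + 1)
        have hv0 : ((α 0 : ℕ)) = 1 := by rw [h0]; rfl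
        have e2 : ∑ i ∈ range (r+1), ((shiftSeq 1 α i : ℕ)) =
            ∑ i ∈ range (r+1), ((α (i+1) : ℕ)) := rfl
        rw [e2] at hpar
        rw [Nat.even_iff] at hev ⊢
        omega

lemma le_of_itin_umLT (hU : Unimodal a b c f) {x y : ℝ} {α β : Bseq}
    (hα : IsItin f a b c x α) (hβ : IsItin f a b c y β) (h : umLT β α) : y ≤ x := by
  by_contra hc
  push_neg at hc
  have hne : ∃ i, α i ≠ β i := by
    obtain ⟨s, _, hs, _⟩ := h
    exact ⟨s, Ne.symm hs⟩
  classical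
  let r := Nat.find hne
  have hner : α r ≠ β r := Nat.find_spec hne
  have hagr : ∀ i < r, α i = β i := fun i hi => by
    have := Nat.find_min hne hi
    simpa using this
  exact umLT_asymm (itin_lt hU r x y α β hc hα hβ hagr hner) h

lemma iter_eq_c {x : ℝ} {α β : Bseq} {r : ℕ} (hα : IsItin f a b c x α)
    (hβ : IsItin f a b c x β) (h : α r ≠ β r) : f^[r] x = c := by
  rcases fin2_cases (α r) with h0 | h0
  · have hβ1 : β r = 1 := by
      rcases fin2_cases (β r) with h' | h'
      · rw [h0, h'] at h; exact absurd rfl h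
      · exact h'
    exact le_antisymm ((hα r).1 h0).2 ((hβ r).2 hβ1).1
  · have hβ0 : β r = 0 := by
      rcases fin2_cases (β r) with h' | h'
      · exact h'
      · rw [h0, h'] at h; exact absurd rfl h
    exact le_antisymm ((hβ r).1 hβ0).2 ((hα r).2 h0).1

lemma eq_c_of_f_eq_b (hU : Unimodal a b c f) {x : ℝ} (hx : x ∈ Set.Icc a b)
    (h : f x = b) : x = c := by
  rcases lt_trichotomy x c with h' | h' | h'
  · have hlt : f x < f c := hU.mono ⟨hx.1, h'.le⟩ ⟨hU.c_mem.1.le, le_refl c⟩ h'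
    rw [h, hU.map_c] at hlt; exact absurd hlt (lt_irrefl b)
  · exact h'
  · have hlt : f x < f c := hU.anti ⟨le_refl c, hU.c_mem.2.le⟩ ⟨h'.le, hx.2⟩ h'
    rw [h, hU.map_c] at hlt; exact absurd hlt (lt_irrefl b)

lemma isItin_of_periodic (hU : Unimodal a b c f) {x : ℝ} {P : ℕ} (hP : 0 < P)
    (hx : f^[P] x = x) {L : Bseq} (hper : ∀ i, L (i + P) = L i)
    (hsym : ∀ i < P, (L i = 0 → f^[i] x ∈ Set.Icc a c) ∧ (L i = 1 → f^[i] x ∈ Set.Icc c b)) :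
    IsItin f a b c x L := by
  intro r
  induction r using Nat.strong_induction_on with
  | _ r IH =>
    by_cases hr : r < P
    · exact hsym r hr
    · have h1 : r = (r - P) + P := by omega
      have h2 : f^[r] x = f^[r - P] x := by
        conv_lhs => rw [h1]
        rw [Function.iterate_add_apply, hx]
      have h3 : L r = L (r - P) := by
        conv_lhs => rw [h1]
        exact hper (r - P)
      rw [h2, h3]
      exact IH (r - P) (by omega)

lemma contOn_iter (hU : Unimodal a b c f) (k : ℕ) : ContinuousOn (f^[k]) (Set.Icc a b) := by
  induction k with
  | zero => simpa using continuousOn_id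
  | succ k ih =>
      rw [Function.iterate_succ']
      exact hU.cont.comp ih (fun x hx => iter_mem hU hx k)

lemma image_Icc_mono (hU : Unimodal a b c f) {u v : ℝ} (huv : u ≤ v) (hu : a ≤ u)
    (hv : v ≤ c) : f '' Set.Icc u v = Set.Icc (f u) (f v) := by
  apply Set.Subset.antisymm
  · rintro _ ⟨x, hx, rfl⟩
    have hum : u ∈ Set.Icc a c := ⟨hu, le_trans huv hv⟩
    have hvm : v ∈ Set.Icc a c := ⟨le_trans hu huv, hv⟩
    have hxm : x ∈ Set.Icc a c := ⟨le_trans hu hx.1, le_trans hx.2 hv⟩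
    exact ⟨hU.mono.monotoneOn hum hxm hx.1, hU.mono.monotoneOn hxm hvm hx.2⟩
  · exact intermediate_value_Icc huv
      (hU.cont.mono (Set.Icc_subset_Icc hu (le_trans hv hU.c_mem.2.le)))

lemma image_Icc_anti (hU : Unimodal a b c f) {u v : ℝ} (huv : u ≤ v) (hu : c ≤ u)
    (hv : v ≤ b) : f '' Set.Icc u v = Set.Icc (f v) (f u) := by
  apply Set.Subset.antisymm
  · rintro _ ⟨x, hx, rfl⟩
    have hum : u ∈ Set.Icc c b := ⟨hu, le_trans huv hv⟩
    have hvm : v ∈ Set.Icc c b := ⟨le_trans hu huv, hv⟩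
    have hxm : x ∈ Set.Icc c b := ⟨le_trans hu hx.1, le_trans hx.2 hv⟩
    exact ⟨hU.anti.antitoneOn hxm hvm hx.2, hU.anti.antitoneOn hum hxm hx.1⟩
  · exact intermediate_value_Icc' huv
      (hU.cont.mono (Set.Icc_subset_Icc (le_trans hU.c_mem.1.le hu) hv))

end
section
variable {a b c : ℝ} {f : ℝ → ℝ}

lemma f_image_uIcc_mono (hU : Unimodal a b c f) {u v : ℝ} (hu : u ∈ Set.Icc a c)
    (hv : v ∈ Set.Icc a c) : f '' Set.uIcc u v = Set.uIcc (f u) (f v) := by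
  rcases le_total u v with h | h
  · rw [Set.uIcc_of_le h, image_Icc_mono hU h hu.1 hv.2,
      Set.uIcc_of_le (hU.mono.monotoneOn hu hv h)]
  · rw [Set.uIcc_of_ge h, image_Icc_mono hU h hv.1 hu.2,
      Set.uIcc_of_ge (hU.mono.monotoneOn hv hu h)]

lemma f_image_uIcc_anti (hU : Unimodal a b c f) {u v : ℝ} (hu : u ∈ Set.Icc c b)
    (hv : v ∈ Set.Icc c b) : f '' Set.uIcc u v = Set.uIcc (f u) (f v) := by
  rcases le_total u v with h | h
  · rw [Set.uIcc_of_le h, image_Icc_anti hU h hu.1 hv.2,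
      Set.uIcc_of_ge (hU.anti.antitoneOn hu hv h)]
  · rw [Set.uIcc_of_ge h, image_Icc_anti hU h hv.1 hu.2,
      Set.uIcc_of_le (hU.anti.antitoneOn hv hu h)]
end
section
open Finset

lemma perSeq_period (W : List (Fin 2)) (i : ℕ) : perSeq W (i + W.length) = perSeq W i := by
  unfold perSeq
  rw [Nat.add_mod_right]

lemma perSeq_eq_getD (W : List (Fin 2)) {i : ℕ} (h : i < W.length) :
    perSeq W i = W.getD i 0 := by
  unfold perSeq
  rw [Nat.mod_eq_of_lt h]

lemma cat_umLT {W : List (Fin 2)} (hW : 0 < W.length) {A τ : Bseq}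
    (hA : ∀ i, A i = if i < W.length then W.getD i 0 else τ (i - W.length))
    {r : ℕ} (hag : ∀ i < r, τ i = perSeq W i) (hne : τ r ≠ perSeq W r)
    (hodd : ¬ Even (∑ i ∈ range (r+1), ((τ i : ℕ)))) : umLT A τ := by
  have hper : ∀ i, W.length ≤ i → perSeq W (i - W.length) = perSeq W i := by
    intro i hi
    conv_rhs => rw [show i = (i - W.length) + W.length by omega]
    rw [perSeq_period]
  have hAper : ∀ i ≤ r, A i = perSeq W i := by
    intro i hi
    rw [hA i]
    by_cases h' : i < W.length
    · rw [if_pos h', perSeq_eq_getD W h']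
    · push_neg at h'
      rw [if_neg (by omega)]
      have h2 : i - W.length < r := by omega
      rw [hag _ h2, hper i h']
  have hagA : ∀ i < r, A i = τ i := fun i hi => by
    rw [hAper i hi.le, ← hag i hi]
  have hneA : A r ≠ τ r := by rw [hAper r le_rfl]; exact Ne.symm hne
  refine ⟨r, hagA, hneA, ?_⟩
  have e1 : ∑ i ∈ range (r+1), ((A i : ℕ)) =
      (∑ i ∈ range r, ((τ i : ℕ))) + ((perSeq W r : ℕ)) := by
    rw [Finset.sum_range_succ, hAper r le_rfl]
    congr 1
    exact Finset.sum_congr rfl (fun i hi => by rw [hagA i (Finset.mem_range.1 hi)])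
  have e2 : ∑ i ∈ range (r+1), ((τ i : ℕ)) =
      (∑ i ∈ range r, ((τ i : ℕ))) + ((τ r : ℕ)) := Finset.sum_range_succ _ _
  have e3 : ((τ r : ℕ)) + ((perSeq W r : ℕ)) = 1 := fin2_add_eq_one hne
  rw [e2, Nat.even_iff] at hodd
  rw [e1, Nat.even_iff]
  omega

lemma preper_not_periodic (w : List (Fin 2)) :
    ¬ PeriodicSeq (preperSeq (w ++ [0]) (w ++ [1])) := by
  rintro ⟨P, hP, hper⟩
  set U := preperSeq (w ++ [0]) (w ++ [1]) with hUdef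
  set n := w.length + 1 with hn
  have hlen0 : (w ++ [(0 : Fin 2)]).length = n := by simp [hn]
  have hlen1 : (w ++ [(1 : Fin 2)]).length = n := by simp [hn]
  have hiter : ∀ k i, U (i + P * k) = U i := by
    intro k
    induction k with
    | zero => simp
    | succ k ih =>
        intro i
        rw [show i + P * (k+1) = (i + P * k) + P by ring, hper, ih]
  have h0 : U w.length = 0 := by
    have : w.length < (w ++ [(0:Fin 2)]).length := by simp
    simp only [hUdef, preperSeq, if_pos this]
    rw [List.getD_append_right _ _ _ _ le_rfl]
    simp
  have h1 : U (w.length + P * n) = 1 := by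
    have hge : ¬ (w.length + P * n < (w ++ [(0:Fin 2)]).length) := by
      have : n ≤ P * n := Nat.le_mul_of_pos_left n hP
      omega
    simp only [hUdef, preperSeq, if_neg hge]
    rw [hlen0]
    have e : w.length + P * n - n = w.length + (P - 1) * n := by
      have h4 : P * n = (P - 1) * n + n := by
        conv_lhs => rw [show P = (P - 1) + 1 by omega]
        ring
      omega
    rw [e]
    unfold perSeq
    rw [hlen1, Nat.add_mul_mod_self_right, Nat.mod_eq_of_lt (by omega)]
    rw [List.getD_append_right _ _ _ _ le_rfl]
    simp
  rw [hiter n w.length] at h1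
  rw [h0] at h1
  exact absurd h1 (by decide)

end
section
open Finset

lemma wq_facts {m n : ℕ} (hm : 0 < m) (hmn : 2*m < n) :
    ∃ Y : List (Fin 2),
      wqWord ((m:ℝ)/n) m = 1 :: 0 :: Y ∧
      (wqWord ((m:ℝ)/n) m).length = n - 1 ∧
      ((wqWord ((m:ℝ)/n) m).map (fun s : Fin 2 => (s : ℕ))).sum = 2*m - 1 := by
  set q : ℝ := (m:ℝ)/n with hqdef
  have hn0 : 0 < n := by omega
  have hfloor : ∀ i : ℕ, ⌊(i:ℝ) / q⌋ = ((i * n / m : ℕ) : ℤ) := by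
    intro i
    have hmr : (0:ℝ) < (m:ℝ) := by exact_mod_cast hm
    have hnr : (0:ℝ) < (n:ℝ) := by exact_mod_cast hn0
    have h1 : (i:ℝ) / q = ((i * n : ℕ):ℝ) / ((m:ℕ):ℝ) := by
      rw [hqdef]; push_cast; field_simp
    rw [h1, ← Int.natCast_floor_eq_floor (by positivity), Nat.floor_div_natCast, Nat.floor_natCast]
  have hdivm : 2 ≤ n / m := (Nat.le_div_iff_mul_le hm).2 (by omega)
  have hkap1 : kap q 1 = n / m - 1 := by
    unfold kap
    rw [if_pos rfl]
    rw [show (1:ℝ)/q = ((1:ℕ):ℝ)/q by norm_num, hfloor 1, one_mul]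
    omega
  have hkapS : ∀ i : ℕ, 2 ≤ i →
      ((kap q i : ℕ) : ℤ) = ((i * n / m : ℕ) : ℤ) - (((i-1) * n / m : ℕ) : ℤ) - 2
      ∧ (i-1) * n / m + 2 ≤ i * n / m := by
    intro i hi
    have hstep : (i-1) * n / m + 2 ≤ i * n / m := by
      have h1 : (i-1)*n/m + n/m ≤ ((i-1)*n + n)/m := by
        rw [Nat.le_div_iff_mul_le hm, add_mul]
        have h2 := Nat.div_mul_le_self ((i-1)*n) m
        have h3 := Nat.div_mul_le_self n m
        omega
      have h2 : (i-1)*n + n = i*n := by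
        conv_rhs => rw [show i = (i-1)+1 by omega]
        ring
      rw [h2] at h1
      omega
    refine ⟨?_, hstep⟩
    unfold kap
    rw [if_neg (by omega)]
    have hc : ((i:ℝ) - 1) / q = (((i-1:ℕ)):ℝ) / q := by
      rw [Nat.cast_sub (by omega : 1 ≤ i)]; norm_num
    rw [hc, hfloor i, hfloor (i-1)]
    omega
  -- telescoping sum of kap (2+t)
  have hsumkap : ((∑ t ∈ range (m-1), kap q (2+t) : ℕ) : ℤ) =
      (n : ℤ) - ((n / m : ℕ) : ℤ) - 2*((m:ℤ)-1) := by
    push_cast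
    have e1 : ∀ t ∈ range (m-1), ((kap q (2+t) : ℕ) : ℤ) =
        ((((t+1)+1) * n / m : ℕ) : ℤ) - (((t+1) * n / m : ℕ) : ℤ) - 2 := by
      intro t _
      have h := (hkapS (2+t) (by omega)).1
      rw [h]
      norm_num [show 2+t-1 = t+1 by omega, show 2+t = (t+1)+1 by omega]
    rw [Finset.sum_congr rfl e1]
    have e2 : (∑ t ∈ range (m-1),
        (((((t+1)+1) * n / m : ℕ) : ℤ) - (((t+1) * n / m : ℕ) : ℤ) - 2))
        = (∑ t ∈ range (m-1),
        (((((t+1)+1) * n / m : ℕ) : ℤ) - (((t+1) * n / m : ℕ) : ℤ))) - 2*((m:ℤ)-1) := by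
      rw [Finset.sum_sub_distrib, Finset.sum_const, Finset.card_range]
      have : ((m:ℤ) - 1) = ((m-1 : ℕ) : ℤ) := by
        rw [Nat.cast_sub hm]; norm_num
      rw [this]; ring
    rw [e2, Finset.sum_range_sub (fun t => (((t+1) * n / m : ℕ) : ℤ)) (m-1)]
    have e3 : ((m-1)+1) * n / m = n := by
      rw [show (m-1)+1 = m by omega, Nat.mul_div_cancel_left n hm]
    have e4 : (0+1) * n / m = n / m := by norm_num
    rw [e3, e4]
    push_cast
    ring
  -- length of tailBody
  have hlen_tb : (tailBody q 1 (m-1)).length = n := by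
    unfold tailBody
    rw [List.length_cons, List.length_append, List.length_replicate,
      List.length_flatten, List.map_map]
    have e5 : (List.map (List.length ∘ fun t => (1:Fin 2) :: 1 :: List.replicate (kap q (1+1+t)) 0)
        (List.range (m-1))).sum = ∑ t ∈ range (m-1), (kap q (2+t) + 2) := by
      have : (List.length ∘ fun t => (1:Fin 2) :: 1 :: List.replicate (kap q (1+1+t)) 0)
          = fun t => kap q (2+t) + 2 := by
        funext t; simp [show 1+1+t = 2+t by omega]
      rw [this, sum_list_range]
    rw [e5, Finset.sum_add_distrib, Finset.sum_const, Finset.card_range, smul_eq_mul]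
    omega
  -- ones of tailBody
  have hones_tb : ((tailBody q 1 (m-1)).map (fun s : Fin 2 => (s : ℕ))).sum = 2*m - 1 := by
    unfold tailBody
    rw [List.map_cons, List.map_append, List.map_flatten, List.map_map, List.sum_cons,
      List.sum_append, List.sum_flatten, List.map_map]
    have e6 : (List.map (List.sum ∘ List.map (fun s : Fin 2 => (s : ℕ)) ∘
        fun t => (1:Fin 2) :: 1 :: List.replicate (kap q (1+1+t)) 0) (List.range (m-1))).sum
        = ∑ _t ∈ range (m-1), 2 := by
      have : (List.sum ∘ List.map (fun s : Fin 2 => (s : ℕ)) ∘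
          fun t => (1:Fin 2) :: 1 :: List.replicate (kap q (1+1+t)) 0) = fun _t => 2 := by
        funext t
        simp [List.map_replicate, List.sum_replicate]
      rw [this, sum_list_range]
    rw [e6, Finset.sum_const, Finset.card_range, smul_eq_mul]
    have e7 : ((List.replicate (kap q 1) (0:Fin 2)).map (fun s : Fin 2 => (s : ℕ))).sum = 0 := by
      simp [List.map_replicate, List.sum_replicate]
    rw [e7]
    simp only [Fin.isValue, Fin.val_one]
    omega
  -- shape of tailBody
  have hshape : ∃ Y : List (Fin 2), tailBody q 1 (m-1) = (1 :: 0 :: Y) ++ [(0:Fin 2)] := by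
    rcases Nat.lt_or_ge m 2 with hm1 | hm2
    · -- m = 1
      have hm1' : m = 1 := by omega
      subst hm1'
      have hk : kap q 1 = n - 1 := by rw [hkap1, Nat.div_one]
      refine ⟨List.replicate (n-3) 0, ?_⟩
      unfold tailBody
      simp only [Nat.sub_self, List.range_zero, List.map_nil, List.flatten_nil, List.append_nil]
      rw [hk]
      rw [show n - 1 = ((n-3) + 1) + 1 by omega]
      rw [List.replicate_succ, List.replicate_succ']
      simp
    · -- m ≥ 2
      have hkapm : 1 ≤ kap q m := by
        have h5 := (hkapS m hm2).1
        have h6 : (m-1)*n/m < n - 2 := by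
          rw [Nat.div_lt_iff_lt_mul hm]
          have e1 : (m-1)*n = m*n - 1*n := by rw [Nat.sub_mul]
          have e2 : (n-2)*m = n*m - 2*m := by rw [Nat.sub_mul]
          have e3 : m*n = n*m := Nat.mul_comm m n
          have e4 : n ≤ n*m := Nat.le_mul_of_pos_right n hm
          omega
        have h7 : m * n / m = n := Nat.mul_div_cancel_left n hm
        omega
      have hrange : List.range (m-1) = List.range (m-2) ++ [m-2] := by
        rw [show m-1 = (m-2)+1 by omega, List.range_succ]
      refine ⟨List.replicate (kap q 1 - 1) 0 ++
        ((((List.range (m-2)).map fun t => (1:Fin 2) :: 1 :: List.replicate (kap q (1+1+t)) 0).flatten)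
          ++ (1 :: 1 :: List.replicate (kap q m - 1) 0)), ?_⟩
      unfold tailBody
      rw [hrange, List.map_append, List.flatten_append]
      simp only [List.map_cons, List.map_nil, List.flatten_cons, List.flatten_nil,
        List.append_nil]
      rw [show 1+1+(m-2) = m by omega]
      conv_lhs => rw [show kap q m = (kap q m - 1) + 1 by omega, List.replicate_succ']
      conv_lhs => rw [show kap q 1 = (kap q 1 - 1) + 1 by omega, List.replicate_succ]
      simp [List.append_assoc]
  obtain ⟨Y, hY⟩ := hshape
  have hw : wqWord q m = 1 :: 0 :: Y := by
    unfold wqWord cqWord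
    rw [hY, List.dropLast_concat, List.dropLast_concat]
  refine ⟨Y, hw, ?_, ?_⟩
  · rw [hw]
    rw [hY] at hlen_tb
    simp only [List.length_append, List.length_cons, List.length_nil] at hlen_tb ⊢
    omega
  · rw [hw]
    rw [hY] at hones_tb
    rw [List.map_append, List.sum_append] at hones_tb
    simpa using hones_tb
end

/-- In the renormalization window `(w_q0)^∞ ≺ κ(f) ⪯ w_q0(w_q1)^∞` of height
`q = m/n`, one has `f^n(a) ≤ c`, `f^n([a, f^n(a))) = [a, f^n(a)]`, and
`f^{n-1}([f(a), f^{n+1}(a)]) = [a, f^n(a)]`. -/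
theorem stmt6 (a b c : ℝ) (f : ℝ → ℝ) (κ : Bseq)
    (hU : Unimodal a b c f) (hC : Convention f a b c κ)
    (m n : ℕ) (hm : 0 < m) (hn : 0 < n) (hcop : Nat.Coprime m n)
    (hq : (m : ℝ) / n < 1 / 2)
    (hheight : height κ = (m : ℝ) / n)
    (h1 : umLT (perSeq (wqWord ((m : ℝ) / n) m ++ [0])) κ)
    (h2 : umLE κ (preperSeq (wqWord ((m : ℝ) / n) m ++ [0]) (wqWord ((m : ℝ) / n) m ++ [1]))) :
    f^[n] a ≤ c ∧
    f^[n] '' Set.Ico a (f^[n] a) = Set.Icc a (f^[n] a) ∧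
    f^[n - 1] '' Set.Icc (f a) (f^[n + 1] a) = Set.Icc a (f^[n] a) := by
  classical
  open Finset in
  have h2mn : 2*m < n := by
    have hn0 : (0:ℝ) < n := by exact_mod_cast hn
    rw [div_lt_div_iff₀ hn0 (by norm_num : (0:ℝ) < 2)] at hq
    have h3 : (2*m : ℝ) < n := by linarith
    exact_mod_cast h3
  have hn3 : 3 ≤ n := by omega
  obtain ⟨Y, hwshape, hwlen, hwones⟩ := wq_facts hm h2mn
  set w := wqWord ((m:ℝ)/n) m with hwdef
  set L : Bseq := perSeq (w ++ [0]) with hLdef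
  set Us : Bseq := preperSeq (w ++ [0]) (w ++ [1]) with hUdef
  have hw0 : w.getD 0 0 = 1 := by rw [hwshape]; rfl
  have hw1 : w.getD 1 0 = 0 := by rw [hwshape]; rfl
  have hlen0 : (w ++ [(0:Fin 2)]).length = n := by
    rw [List.length_append, hwlen]; simp; omega
  have hlen1 : (w ++ [(1:Fin 2)]).length = n := by
    rw [List.length_append, hwlen]; simp; omega
  -- L values
  have hLlt : ∀ i < n, L i = (w ++ [0]).getD i 0 := by
    intro i hi
    rw [hLdef]; unfold perSeq; rw [hlen0, Nat.mod_eq_of_lt hi]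
  have hLper : ∀ i, L (i + n) = L i := by
    intro i
    have h3 := perSeq_period (w ++ [(0:Fin 2)]) i
    rw [hlen0] at h3
    exact h3
  have hLw : ∀ i < n - 1, L i = w.getD i 0 := by
    intro i hi
    rw [hLlt i (by omega), List.getD_append _ _ _ _ (by rw [hwlen]; omega)]
  have hL0 : L 0 = 1 := by rw [hLw 0 (by omega), hw0]
  have hL1 : L 1 = 0 := by rw [hLw 1 (by omega), hw1]
  have hLn1 : L (n-1) = 0 := by
    rw [hLlt (n-1) (by omega), List.getD_append_right _ _ _ _ (by rw [hwlen])]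
    rw [hwlen]
    simp
  have hLn : L n = 1 := by rw [show n = 0 + n by omega, hLper, hL0]
  have hLsn : L (n+1) = 0 := by rw [show n+1 = 1 + n by omega, hLper, hL1]
  have hL2n1 : L (2*n-1) = 0 := by rw [show 2*n-1 = (n-1) + n by omega, hLper, hLn1]
  have hL2n : L (2*n) = 1 := by rw [show 2*n = n + n by omega, hLper, hLn]
  -- U values
  have hUlt : ∀ i < n, Us i = (w++[0]).getD i 0 := by
    intro i hi
    rw [hUdef]; unfold preperSeq; rw [if_pos (by rw [hlen0]; exact hi)]
  have hUge : ∀ i, Us (n + i) = perSeq (w ++ [1]) i := by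
    intro i
    rw [hUdef]; unfold preperSeq
    rw [if_neg (by rw [hlen0]; omega), hlen0]
    congr 1
    omega
  have hUper2 : ∀ i, Us (2*n + i) = perSeq (w++[1]) i := by
    intro i
    rw [show 2*n + i = n + (i + n) by ring, hUge]
    have h3 := perSeq_period (w++[(1:Fin 2)]) i
    rw [hlen1] at h3
    exact h3
  have hPW1 : perSeq (w ++ [1]) (n-1) = 1 := by
    rw [perSeq_eq_getD _ (by rw [hlen1]; omega)]
    rw [List.getD_append_right _ _ _ _ (le_of_eq hwlen)]
    rw [hwlen]
    simp
  have hU2n1 : Us (2*n - 1) = 1 := by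
    rw [show 2*n-1 = n + (n-1) by omega, hUge, hPW1]
  -- agreement below 2n-1 and prefix forcing
  have hagLU : ∀ i < 2*n - 1, L i = Us i := by
    intro i hi
    by_cases h' : i < n
    · rw [hLlt i h', hUlt i h']
    · push_neg at h'
      have hj : i - n < n - 1 := by omega
      have e1 : L ((i-n) + n) = w.getD (i-n) 0 := by rw [hLper, hLw _ hj]
      have e2 : Us (n + (i-n)) = w.getD (i-n) 0 := by
        rw [hUge, perSeq_eq_getD _ (by rw [hlen1]; omega),
          List.getD_append _ _ _ _ (by rw [hwlen]; omega)]
      rw [show (i-n) + n = i by omega] at e1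
      rw [show n + (i-n) = i by omega] at e2
      rw [e1, e2]
  have hpre : ∀ i < 2*n - 1, κ i = L i := prefix_force h1 h2 hagLU
  -- dynamics basics
  have hbm : b ∈ Set.Icc a b := ⟨hU.a_lt_b.le, le_rfl⟩
  have horb : ∀ k, f^[k] b ∈ Set.Icc a b := fun k => iter_mem hU hbm k
  have hit : IsItin f a b c b κ := hC.kneading.1
  have hfb : f b = a := hU.map_b
  have hfa : ∀ k, f^[k+1] b = f^[k] a := fun k => by
    rw [Function.iterate_succ_apply, hfb]
  have hac : a < c := hU.c_mem.1
  have hcb : c < b := hU.c_mem.2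
  have hsym : ∀ i < 2*n - 1,
      (L i = 0 → f^[i] b ∈ Set.Icc a c) ∧ (L i = 1 → f^[i] b ∈ Set.Icc c b) := by
    intro i hi
    constructor <;> intro h'
    · exact (hit i).1 (by rw [hpre i hi, h'])
    · exact (hit i).2 (by rw [hpre i hi, h'])
  have htpos : f^[n] b ∈ Set.Icc c b := (hsym n (by omega)).2 hLn
  have hppos : f^[n+1] b ∈ Set.Icc a c := (hsym (n+1) (by omega)).1 hLsn
  have hn2pos : f^[n-1] b ∈ Set.Icc a c := (hsym (n-1) (by omega)).1 hLn1
  -- sums of L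
  have hsumLn : ∑ i ∈ Finset.range n, ((L i : ℕ)) = 2*m - 1 := by
    have e1 : ∀ i ∈ Finset.range n, ((L i :ℕ)) = (((w++[0]).getD i 0 : Fin 2) : ℕ) := by
      intro i hi
      rw [hLlt i (Finset.mem_range.1 hi)]
    rw [Finset.sum_congr rfl e1]
    have e2 := sum_getD (w ++ [(0:Fin 2)])
    rw [hlen0] at e2
    rw [e2, List.map_append, List.sum_append, hwones]
    simp
  have hwinL : ∀ k, ∑ i ∈ Finset.range n, ((L (k+i) : ℕ)) = 2*m - 1 := by
    intro k
    rw [sum_window hLper k, hsumLn]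
  -- kneading minimality contradiction helper
  have hLitin_contra : IsItin f a b c b L → False := by
    intro hLitin
    rcases hC.kneading.2 L hLitin with h' | h'
    · exact umLT_asymm h' h1
    · rw [h'] at h1
      exact umLT_irrefl L h1
  have hkill : f^[2*n - 1] b ≠ c := by
    intro hcc
    have hper2n : f^[2*n] b = b := by
      rw [show 2*n = (2*n-1)+1 by omega, Function.iterate_succ_apply', hcc, hU.map_c]
    apply hLitin_contra
    apply isItin_of_periodic hU (by omega : 0 < 2*n) hper2n
    · intro i
      rw [show i + 2*n = (i + n) + n by ring, hLper, hLper]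
    · intro i hi
      by_cases h' : i < 2*n - 1
      · exact hsym i h'
      · have hieq : i = 2*n - 1 := by omega
        subst hieq
        constructor
        · intro _
          rw [hcc]
          exact ⟨hac.le, le_rfl⟩
        · intro habs
          rw [hL2n1] at habs
          exact absurd habs (by decide)
  have hκ2n1 : κ (2*n - 1) = 1 := by
    rcases fin2_cases (κ (2*n-1)) with h0 | h0
    swap
    · exact h0
    exfalso
    have hagk : ∀ i < 2*n, L i = κ i := by
      intro i hi
      rcases Nat.lt_or_ge i (2*n-1) with h' | h'
      · exact (hpre i h').symm
      · have hieq : i = 2*n-1 := by omega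
        subst hieq
        rw [h0, hL2n1]
    have hκ2n : κ (2*n) = 1 := by
      rcases fin2_cases (κ (2*n)) with h1' | h1'
      swap
      · exact h1'
      exfalso
      have hne : L (2*n) ≠ κ (2*n) := by rw [hL2n, h1']; decide
      have hev := umLT_even_at h1 hagk hne
      have e1 : ∑ i ∈ Finset.range (2*n+1), ((L i:ℕ)) = 2*(2*m-1) + 1 := by
        rw [Finset.sum_range_succ, hL2n]
        rw [show 2*n = n + n by ring, sum_split, hsumLn]
        have := hwinL n
        rw [this]
        simp
        omega
      rw [e1, Nat.even_iff] at hev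
      omega
    have hagk2 : ∀ i < 2*n + 1, L i = κ i := by
      intro i hi
      rcases Nat.lt_or_ge i (2*n) with h' | h'
      · exact hagk i h'
      · have hieq : i = 2*n := by omega
        subst hieq
        rw [hκ2n, hL2n]
    obtain ⟨r, hagr, hner, hparr⟩ := h1
    have hr2n : 2*n + 1 ≤ r := by
      by_contra hcon
      push_neg at hcon
      exact hner (hagk2 r hcon)
    have hκL : ∀ i < r, κ i = L i := fun i hi => (hagr i hi).symm
    have hLrr : L r = L (r - 2*n) := by
      conv_lhs => rw [show r = ((r - 2*n) + n) + n by omega]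
      rw [hLper, hLper]
    have hshift_ag : ∀ i < r - 2*n, κ i = shiftSeq (2*n) κ i := by
      intro i hi
      show κ i = κ (i + 2*n)
      rw [hκL i (by omega), hκL (i + 2*n) (by omega)]
      rw [show i + 2*n = (i+n)+n by ring, hLper, hLper]
    have hshift_ne : κ (r - 2*n) ≠ shiftSeq (2*n) κ (r - 2*n) := by
      show κ (r - 2*n) ≠ κ ((r - 2*n) + 2*n)
      rw [hκL (r - 2*n) (by omega), show (r - 2*n) + 2*n = r by omega]
      intro hcon
      rw [← hLrr] at hcon
      exact hner hcon
    have hpar : Even (∑ i ∈ Finset.range ((r - 2*n)+1), ((κ i:ℕ))) := by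
      have e2 : ∑ i ∈ Finset.range ((r-2*n)+1), ((κ i:ℕ))
          = ∑ i ∈ Finset.range ((r-2*n)+1), ((L i:ℕ)) := by
        apply Finset.sum_congr rfl
        intro i hi
        have := Finset.mem_range.1 hi
        rw [hκL i (by omega)]
      have e3 : ∑ i ∈ Finset.range (r+1), ((L i:ℕ))
          = (∑ i ∈ Finset.range ((r-2*n)+1), ((L i:ℕ))) + (2*m-1) + (2*m-1) := by
        rw [show r + 1 = ((r - 2*n)+1) + (n + n) by omega]
        rw [sum_split (fun i => ((L i : ℕ))) ((r-2*n)+1) (n+n)]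
        rw [sum_split (fun i => ((L ((r-2*n)+1 + i) : ℕ))) n n]
        have e5 : ∑ i ∈ Finset.range n, ((L ((r-2*n)+1 + (n + i)) : ℕ))
            = ∑ i ∈ Finset.range n, ((L (((r-2*n)+1+n) + i) : ℕ)) :=
          Finset.sum_congr rfl (fun i _ => by
            rw [show (r-2*n)+1 + (n+i) = ((r-2*n)+1+n)+i by omega])
        rw [e5, hwinL ((r-2*n)+1), hwinL ((r-2*n)+1+n)]
        omega
      rw [e2]
      rw [e3] at hparr
      rw [Nat.even_iff] at hparr ⊢
      omega
    have humshift : umLT κ (shiftSeq (2*n) κ) := ⟨r - 2*n, hshift_ag, hshift_ne, hpar⟩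
    have hitin2n : IsItin f a b c (f^[2*n] b) (shiftSeq (2*n) κ) := isItin_shift hit (2*n)
    have hble : b ≤ f^[2*n] b := le_of_itin_umLT hU hitin2n hit humshift
    have hbeq : f^[2*n] b = b := le_antisymm (horb (2*n)).2 hble
    apply hkill
    apply eq_c_of_f_eq_b hU (horb (2*n-1))
    have e4 : f^[2*n] b = f (f^[2*n-1] b) := by
      conv_lhs => rw [show 2*n = (2*n-1)+1 by omega]
      exact Function.iterate_succ_apply' f (2*n-1) b
    rw [← e4, hbeq]
  -- position of f^[2n-2] a
  have hfa2n2 : f^[2*n-1] b = f^[2*n-2] a := by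
    rw [show 2*n-1 = (2*n-2)+1 by omega, hfa]
  have h2n2 : c < f^[2*n-2] a := by
    have hpos : f^[2*n-1] b ∈ Set.Icc c b := (hit (2*n-1)).2 hκ2n1
    have hne := hkill
    rw [hfa2n2] at hpos hne
    exact lt_of_le_of_ne hpos.1 (Ne.symm hne)
  have hitadd : ∀ k l (x:ℝ), f^[k + l] x = f^[k] (f^[l] x) :=
    fun k l x => Function.iterate_add_apply f k l x
  -- p basics
  have hpn : f^[n+1] b = f^[n] a := hfa n
  have hpmem : f^[n] a ∈ Set.Icc a b := by rw [← hpn]; exact horb (n+1)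
  have hpc : f^[n] a ≤ c := by rw [← hpn]; exact hppos.2
  have hn2a : f^[n-1] b = f^[n-2] a := by rw [show n-1 = (n-2)+1 by omega, hfa]
  have hn2ac : f^[n-2] a ≤ c := by rw [← hn2a]; exact hn2pos.2
  have hap : a < f^[n] a := by
    rcases eq_or_lt_of_le hpmem.1 with he | h
    · exfalso
      have e : f^[2*n-2] a = f^[n-2] a := by
        rw [show 2*n-2 = (n-2) + n by omega, hitadd, ← he]
      rw [e] at h2n2
      exact absurd hn2ac (not_le.2 h2n2)
    · exact h
  -- t and y2
  have htdef : f^[n] b = f^[n-1] a := by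
    conv_lhs => rw [show n = (n-1)+1 by omega]
    exact hfa (n-1)
  have hct : c ≤ f^[n-1] a := by rw [← htdef]; exact htpos.1
  have htb : f^[n-1] a ≤ b := by rw [← htdef]; exact (horb n).2
  have hy2def : f^[2*n] b = f^[2*n-1] a := by
    conv_lhs => rw [show 2*n = (2*n-1)+1 by omega]
    exact hfa (2*n-1)
  have hitn : IsItin f a b c (f^[n-1] a) (shiftSeq n κ) := by
    rw [← htdef]; exact isItin_shift hit n
  have hit2n : IsItin f a b c (f^[2*n-1] a) (shiftSeq (2*n) κ) := by
    rw [← hy2def]; exact isItin_shift hit (2*n)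
  have hy2mem : f^[2*n-1] a ∈ Set.Icc a b := by rw [← hy2def]; exact horb (2*n)
  have hκU : ∀ i < 2*n, κ i = Us i := by
    intro i hi
    rcases Nat.lt_or_ge i (2*n-1) with h' | h'
    · rw [hpre i h', hagLU i h']
    · have hieq : i = 2*n-1 := by omega
      subst hieq
      rw [hκ2n1, hU2n1]
  have hshiftn : ∀ i, shiftSeq n κ i =
      if i < (w++[(1:Fin 2)]).length then (w++[(1:Fin 2)]).getD i 0
      else shiftSeq (2*n) κ (i - (w++[(1:Fin 2)]).length) := by
    intro i
    rw [hlen1]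
    by_cases h' : i < n
    · rw [if_pos h']
      show κ (i + n) = _
      rcases Nat.lt_or_ge i (n-1) with h'' | h''
      · rw [hpre (i+n) (by omega), hLper, hLw i h'',
          List.getD_append _ _ _ _ (by rw [hwlen]; omega)]
      · have hieq : i = n-1 := by omega
        subst hieq
        rw [show (n-1) + n = 2*n-1 by omega, hκ2n1,
          List.getD_append_right _ _ _ _ (le_of_eq hwlen),
          hwlen]
        simp
    · rw [if_neg h']
      show κ (i + n) = κ ((i - n) + 2*n)
      congr 1
      omega
  have hH : f^[n-1] a ≤ f^[2*n-1] a := by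
    rcases h2 with hlt | heq
    · obtain ⟨R, hagU', hneU', hparU'⟩ := hlt
      have hR : 2*n ≤ R := by
        by_contra hcon
        push_neg at hcon
        exact hneU' (hκU R hcon)
      have hagτ : ∀ i < R - 2*n, shiftSeq (2*n) κ i = perSeq (w++[1]) i := by
        intro i hi
        show κ (i + 2*n) = _
        rw [hagU' (i + 2*n) (by omega), show i + 2*n = 2*n + i by ring, hUper2 i]
      have hneτ : shiftSeq (2*n) κ (R - 2*n) ≠ perSeq (w++[1]) (R - 2*n) := by
        show κ ((R - 2*n) + 2*n) ≠ _
        rw [show (R - 2*n) + 2*n = R by omega]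
        intro hcon
        apply hneU'
        rw [hcon, ← hUper2 (R - 2*n), show 2*n + (R - 2*n) = R by omega]
      have hoddτ : ¬ Even (∑ i ∈ Finset.range ((R - 2*n)+1), ((shiftSeq (2*n) κ i : ℕ))) := by
        have e6 : ∑ i ∈ Finset.range (2*n), ((L i:ℕ)) = 2*(2*m-1) := by
          rw [show 2*n = n + n by ring, sum_split (fun i => ((L i:ℕ))) n n, hsumLn, hwinL n]
          omega
        have e7 : ∑ i ∈ Finset.range (2*n), ((L i:ℕ))
            = (∑ i ∈ Finset.range (2*n-1), ((L i:ℕ))) + ((L (2*n-1) : ℕ)) := by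
          conv_lhs => rw [show 2*n = (2*n-1)+1 by omega]
          exact Finset.sum_range_succ _ _
        have e8 : ∑ i ∈ Finset.range (2*n), ((κ i:ℕ))
            = (∑ i ∈ Finset.range (2*n-1), ((κ i:ℕ))) + ((κ (2*n-1) : ℕ)) := by
          conv_lhs => rw [show 2*n = (2*n-1)+1 by omega]
          exact Finset.sum_range_succ _ _
        have e9 : ∑ i ∈ Finset.range (2*n-1), ((κ i:ℕ))
            = ∑ i ∈ Finset.range (2*n-1), ((L i:ℕ)) :=
          Finset.sum_congr rfl (fun i hi => by rw [hpre i (Finset.mem_range.1 hi)])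
        have e10 : ((κ (2*n-1) : ℕ)) = 1 := by rw [hκ2n1]; rfl
        have e11 : ((L (2*n-1) : ℕ)) = 0 := by rw [hL2n1]; rfl
        have e12 : ∑ i ∈ Finset.range (R+1), ((κ i:ℕ))
            = (∑ i ∈ Finset.range (2*n), ((κ i:ℕ)))
              + ∑ i ∈ Finset.range ((R-2*n)+1), ((κ (2*n + i):ℕ)) := by
          rw [show R + 1 = 2*n + ((R-2*n)+1) by omega]
          exact sum_split _ _ _
        have e13 : ∑ i ∈ Finset.range ((R-2*n)+1), ((shiftSeq (2*n) κ i : ℕ))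
            = ∑ i ∈ Finset.range ((R-2*n)+1), ((κ (2*n + i):ℕ)) :=
          Finset.sum_congr rfl (fun i _ => by
            show ((κ (i+2*n):ℕ)) = _
            rw [show i+2*n = 2*n+i by ring])
        intro habs
        have hevR := hparU'
        rw [Nat.even_iff] at habs hevR
        rw [e13] at habs
        omega
      have humP : umLT (shiftSeq n κ) (shiftSeq (2*n) κ) :=
        cat_umLT (by rw [hlen1]; omega) hshiftn hagτ hneτ hoddτ
      exact le_of_itin_umLT hU hit2n hitn humP
    · have hnp : ¬ PeriodicSeq κ := by rw [heq]; exact preper_not_periodic w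
      have hμ : shiftSeq (2*n) κ = shiftSeq n κ := by
        funext i
        show κ (i + 2*n) = κ (i + n)
        rw [heq, show i + 2*n = 2*n + i by ring, hUper2, show i + n = n + i by ring, hUge]
      have heq2 := hC.itin_inj hnp (f^[2*n-1] a) hy2mem (f^[n-1] a)
        (by rw [← htdef]; exact horb n) (shiftSeq n κ) (by rw [← hμ]; exact hit2n) hitn
      exact le_of_eq heq2.symm
  have hsucc' : ∀ (k:ℕ) (x:ℝ), f^[k+1] x = f (f^[k] x) :=
    fun k x => Function.iterate_succ_apply' f k x
  have hamem : a ∈ Set.Icc a b := ⟨le_rfl, hU.a_lt_b.le⟩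
  have haam : ∀ k, f^[k] a ∈ Set.Icc a b := fun k => iter_mem hU hamem k
  have haJ : a ∈ Set.Icc a (f^[n] a) := ⟨le_rfl, hap.le⟩
  have hpJ : f^[n] a ∈ Set.Icc a (f^[n] a) := ⟨hap.le, le_rfl⟩
  have hvp : f^[n-2] (f^[n] a) = f^[2*n-2] a := by
    rw [← hitadd, show (n-2) + n = 2*n-2 by omega]
  have hmono : ∀ i, i ≤ n-2 →
      (StrictMonoOn (f^[i]) (Set.Icc a (f^[n] a)) ∨
        StrictAntiOn (f^[i]) (Set.Icc a (f^[n] a)))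
      ∧ f^[i] '' (Set.Icc a (f^[n] a)) = Set.uIcc (f^[i] a) (f^[i] (f^[n] a)) := by
    intro i
    induction i with
    | zero =>
        intro _
        constructor
        · left
          intro x hx y hy hxy
          simpa using hxy
        · simp [Set.uIcc_of_le hap.le]
    | succ i IH =>
        intro hi
        obtain ⟨hmi, hIm⟩ := IH (by omega)
        have hii : i + 1 < 2*n - 1 := by omega
        have hni : n + i + 1 < 2*n - 1 := by omega
        have hfia : f^[i] a = f^[i+1] b := (hfa i).symm
        have hfip : f^[i] (f^[n] a) = f^[n+i+1] b := by
          rw [← hitadd i n a, show i + n = n + i by ring, ← hfa (n+i)]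
        have hLeq : L (n+i+1) = L (i+1) := by
          rw [show n+i+1 = (i+1)+n by ring, hLper]
        have hcomp : f^[i+1] '' (Set.Icc a (f^[n] a))
            = f '' (f^[i] '' (Set.Icc a (f^[n] a))) := by
          rw [Function.iterate_succ']
          exact Set.image_comp f (f^[i]) _
        rcases fin2_cases (L (i+1)) with hs | hs
        · have hA : f^[i] a ∈ Set.Icc a c := by
            rw [hfia]; exact (hsym (i+1) hii).1 hs
          have hP : f^[i] (f^[n] a) ∈ Set.Icc a c := by
            rw [hfip]
            refine (hsym (n+i+1) hni).1 ?_
            rw [hLeq, hs]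
          have hsub : Set.uIcc (f^[i] a) (f^[i] (f^[n] a)) ⊆ Set.Icc a c :=
            Set.uIcc_subset_Icc hA hP
          have hmem' : ∀ x ∈ Set.Icc a (f^[n] a), f^[i] x ∈ Set.Icc a c := by
            intro x hx
            apply hsub
            rw [← hIm]
            exact Set.mem_image_of_mem _ hx
          constructor
          · rcases hmi with hsm | hsa
            · left
              intro x hx y hy hxy
              rw [hsucc' i x, hsucc' i y]
              exact hU.mono (hmem' x hx) (hmem' y hy) (hsm hx hy hxy)
            · right
              intro x hx y hy hxy
              rw [hsucc' i x, hsucc' i y]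
              exact hU.mono (hmem' y hy) (hmem' x hx) (hsa hx hy hxy)
          · rw [hcomp, hIm, f_image_uIcc_mono hU hA hP, hsucc' i a, hsucc' i (f^[n] a)]
        · have hA : f^[i] a ∈ Set.Icc c b := by
            rw [hfia]; exact (hsym (i+1) hii).2 hs
          have hP : f^[i] (f^[n] a) ∈ Set.Icc c b := by
            rw [hfip]
            refine (hsym (n+i+1) hni).2 ?_
            rw [hLeq, hs]
          have hsub : Set.uIcc (f^[i] a) (f^[i] (f^[n] a)) ⊆ Set.Icc c b :=
            Set.uIcc_subset_Icc hA hP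
          have hmem' : ∀ x ∈ Set.Icc a (f^[n] a), f^[i] x ∈ Set.Icc c b := by
            intro x hx
            apply hsub
            rw [← hIm]
            exact Set.mem_image_of_mem _ hx
          constructor
          · rcases hmi with hsm | hsa
            · right
              intro x hx y hy hxy
              rw [hsucc' i x, hsucc' i y]
              exact hU.anti (hmem' x hx) (hmem' y hy) (hsm hx hy hxy)
            · left
              intro x hx y hy hxy
              rw [hsucc' i x, hsucc' i y]
              exact hU.anti (hmem' y hy) (hmem' x hx) (hsa hx hy hxy)
          · rw [hcomp, hIm, f_image_uIcc_anti hU hA hP, hsucc' i a, hsucc' i (f^[n] a)]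
  obtain ⟨hm2, hIm2⟩ := hmono (n-2) le_rfl
  have hvgt : c < f^[n-2] (f^[n] a) := by rw [hvp]; exact h2n2
  have huv : f^[n-2] a < f^[n-2] (f^[n] a) := lt_of_le_of_lt hn2ac hvgt
  have hsm2 : StrictMonoOn (f^[n-2]) (Set.Icc a (f^[n] a)) := by
    rcases hm2 with h' | h'
    · exact h'
    · exact absurd (h' haJ hpJ hap) (not_lt.2 huv.le)
  have hIm2' : f^[n-2] '' (Set.Icc a (f^[n] a))
      = Set.Icc (f^[n-2] a) (f^[n-2] (f^[n] a)) := by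
    rw [hIm2, Set.uIcc_of_le huv.le]
  have hta : f (f^[n-2] a) = f^[n-1] a := by
    rw [← hsucc' (n-2) a, show (n-2)+1 = n-1 by omega]
  have hy2a : f (f^[n-2] (f^[n] a)) = f^[2*n-1] a := by
    rw [hvp, ← hsucc' (2*n-2) a, show (2*n-2)+1 = 2*n-1 by omega]
  have himg_lower : f '' Set.Icc (f^[n-2] a) c = Set.Icc (f^[n-1] a) b := by
    rw [image_Icc_mono hU hn2ac (haam (n-2)).1 le_rfl, hU.map_c, hta]
  have himg_upper : f '' Set.Icc c (f^[n-2] (f^[n] a)) = Set.Icc (f^[2*n-1] a) b := by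
    have hvb : f^[n-2] (f^[n] a) ≤ b := by rw [hvp]; exact (haam (2*n-2)).2
    rw [image_Icc_anti hU hvgt.le le_rfl hvb, hU.map_c, hy2a]
  have himage_split : ∀ (k l : ℕ) (S : Set ℝ), f^[k + l] '' S = f^[k] '' (f^[l] '' S) := by
    intro k l S
    rw [Function.iterate_add f k l]
    exact Set.image_comp _ _ _
  have himgn1 : f^[n-1] '' (Set.Icc a (f^[n] a)) = Set.Icc (f^[n-1] a) b := by
    have e30 := himage_split 1 (n-2) (Set.Icc a (f^[n] a))
    rw [show 1 + (n-2) = n-1 by omega, Function.iterate_one] at e30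
    rw [e30, hIm2']
    rw [← Set.Icc_union_Icc_eq_Icc hn2ac hvgt.le, Set.image_union, himg_lower, himg_upper]
    apply Set.union_eq_self_of_subset_right
    exact Set.Icc_subset_Icc hH le_rfl
  have hftb : f '' Set.Icc (f^[n-1] a) b = Set.Icc a (f^[n] a) := by
    rw [image_Icc_anti hU htb hct le_rfl, hU.map_b]
    have e20 : f (f^[n-1] a) = f^[n] a := by
      rw [← hsucc' (n-1) a, show (n-1)+1 = n by omega]
    rw [e20]
  have himgn : f^[n] '' (Set.Icc a (f^[n] a)) = Set.Icc a (f^[n] a) := by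
    have e31 := himage_split 1 (n-1) (Set.Icc a (f^[n] a))
    rw [show 1 + (n-1) = n by omega, Function.iterate_one] at e31
    rw [e31, himgn1, hftb]
  have hfp : f (f^[n] a) = f^[n+1] a := (hsucc' n a).symm
  have hfJ : f '' Set.Icc a (f^[n] a) = Set.Icc (f a) (f^[n+1] a) := by
    rw [image_Icc_mono hU hap.le le_rfl hpc, hfp]
  have hcompn1' : f^[n-1] ∘ f = f^[n] := by
    conv_rhs => rw [show n = (n-1)+1 by omega]
    exact (Function.iterate_succ f (n-1)).symm
  have goal3 : f^[n-1] '' Set.Icc (f a) (f^[n+1] a) = Set.Icc a (f^[n] a) := by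
    rw [← hfJ, ← Set.image_comp, hcompn1', himgn]
  have hcmem : c ∈ f^[n-2] '' (Set.Icc a (f^[n] a)) := by
    rw [hIm2']
    exact ⟨hn2ac, hvgt.le⟩
  obtain ⟨xc, hxcJ, hxc⟩ := hcmem
  have hxcp : xc < f^[n] a := by
    rcases eq_or_lt_of_le hxcJ.2 with he | h
    · exfalso
      rw [he] at hxc
      rw [hxc] at hvgt
      exact lt_irrefl c hvgt
    · exact h
  have hsubxc : Set.Icc a xc ⊆ Set.Icc a (f^[n] a) := Set.Icc_subset_Icc le_rfl hxcp.le
  have himg_sub : f^[n-2] '' Set.Icc a xc = Set.Icc (f^[n-2] a) c := by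
    apply Set.Subset.antisymm
    · rintro _ ⟨x, hx, rfl⟩
      have hxJ : x ∈ Set.Icc a (f^[n] a) := hsubxc hx
      constructor
      · exact hsm2.monotoneOn haJ hxJ hx.1
      · rw [← hxc]
        exact hsm2.monotoneOn hxJ hxcJ hx.2
    · have hcont : ContinuousOn (f^[n-2]) (Set.Icc a xc) :=
        (contOn_iter hU (n-2)).mono
          (Set.Icc_subset_Icc le_rfl (le_trans hxcp.le hpmem.2))
      have h21 := intermediate_value_Icc hxcJ.1 hcont
      rw [hxc] at h21
      exact h21
  have hxcIco : Set.Icc a xc ⊆ Set.Ico a (f^[n] a) :=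
    fun y hy => ⟨hy.1, lt_of_le_of_lt hy.2 hxcp⟩
  have himgxc : f^[n] '' Set.Icc a xc = Set.Icc a (f^[n] a) := by
    have e32 := himage_split 1 (n-1) (Set.Icc a xc)
    rw [show 1 + (n-1) = n by omega, Function.iterate_one] at e32
    have e33 := himage_split 1 (n-2) (Set.Icc a xc)
    rw [show 1 + (n-2) = n-1 by omega, Function.iterate_one] at e33
    rw [e32, e33, himg_sub, himg_lower, hftb]
  have goal2 : f^[n] '' Set.Ico a (f^[n] a) = Set.Icc a (f^[n] a) := by
    apply Set.Subset.antisymm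
    · rw [← himgn]
      exact Set.image_mono Set.Ico_subset_Icc_self
    · rw [← himgxc]
      exact Set.image_mono hxcIco
  exact ⟨hpc, goal2, goal3⟩
end

section
/- For every irrational q ∈ (0,1/2), the sequence α_q = 1 0^{κ_1(q)} 11 0^{κ_2(q)} 11 0^{κ_3(q)} 11 ⋯ belongs to KS and has height q(α_q) = q; moreover α_q is the unique element of KS of height q: every α ∈ KS with q(α) = q equals α_q. -/
open Set

/- ===== Auxiliary development for stmt10 ===== -/

section OrderBasics

lemma st_fin2_cases (a : Fin 2) : a = 0 ∨ a = 1 := by revert a; decide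

lemma st_fin2_add_one {a b : Fin 2} (h : a ≠ b) : (a : ℕ) + (b : ℕ) = 1 := by
  revert h; revert b; revert a; decide

lemma st_umLT_iff_at {α β : Bseq} {r : ℕ} (h1 : ∀ i, i < r → α i = β i) (h2 : α r ≠ β r) :
    umLT α β ↔ Even (∑ i ∈ Finset.range (r + 1), ((α i : ℕ))) := by
  constructor
  · rintro ⟨r', h1', h2', h3'⟩
    have hrr : r' = r := by
      rcases lt_trichotomy r' r with h | h | h
      · exact absurd (h1 _ h) h2'
      · exact h
      · exact absurd ((h1' _ h).symm) (Ne.symm h2)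
    subst hrr; exact h3'
  · exact fun h => ⟨r, h1, h2, h⟩

lemma st_sum_agree {α β : Bseq} {r : ℕ} (h1 : ∀ i, i < r → α i = β i) :
    ∑ i ∈ Finset.range r, ((α i : ℕ)) = ∑ i ∈ Finset.range r, ((β i : ℕ)) :=
  Finset.sum_congr rfl fun i hi => by rw [h1 i (Finset.mem_range.mp hi)]

lemma st_parity_flip {α β : Bseq} {r : ℕ} (h1 : ∀ i, i < r → α i = β i) (h2 : α r ≠ β r) :
    ¬ (Even (∑ i ∈ Finset.range (r + 1), ((α i : ℕ))) ↔
       Even (∑ i ∈ Finset.range (r + 1), ((β i : ℕ)))) := by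
  have hs := st_sum_agree h1
  have hone := st_fin2_add_one h2
  rw [Finset.sum_range_succ, Finset.sum_range_succ]
  simp only [Nat.even_iff]
  omega

lemma st_umLT_asymm {α β : Bseq} (h : umLT α β) : ¬ umLT β α := by
  rintro ⟨r, k1, k2, k3⟩
  have h2 : α r ≠ β r := Ne.symm k2
  have h1 : ∀ i, i < r → α i = β i := fun i hi => (k1 i hi).symm
  have hα := (st_umLT_iff_at h1 h2).mp h
  exact st_parity_flip h1 h2 ⟨fun _ => k3, fun _ => hα⟩

lemma st_umLT_trans {α β γ : Bseq} (hab : umLT α β) (hbc : umLT β γ) : umLT α γ := by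
  obtain ⟨r1, a1, a2, a3⟩ := hab
  obtain ⟨r2, b1, b2, b3⟩ := hbc
  rcases lt_trichotomy r1 r2 with h | h | h
  · exact ⟨r1, fun i hi => (a1 i hi).trans (b1 i (hi.trans h)),
      by rw [← b1 r1 h]; exact a2, a3⟩
  · subst h
    exact absurd (iff_of_true a3 b3) (st_parity_flip a1 a2)
  · refine ⟨r2, fun i hi => (a1 i (hi.trans h)).trans (b1 i hi), ?_, ?_⟩
    · rw [a1 r2 h]; exact b2
    · have : ∑ i ∈ Finset.range (r2 + 1), ((α i : ℕ)) =
          ∑ i ∈ Finset.range (r2 + 1), ((β i : ℕ)) :=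
        st_sum_agree (fun i hi => a1 i (by omega))
      rw [this]; exact b3

end OrderBasics

section Gfl

/-- `⌊ i / q ⌋` as a natural number. -/
noncomputable def gfl (q : ℝ) (i : ℕ) : ℕ := (⌊(i : ℝ) / q⌋).toNat

lemma st_gfl_cast {q : ℝ} (hq : 0 < q) (i : ℕ) : ((gfl q i : ℤ) : ℝ) ≤ (i : ℝ) / q ∧
    (i : ℝ) / q < (gfl q i : ℤ) + 1 := by
  have h0 : (0 : ℝ) ≤ (i : ℝ) / q := by positivity
  have : (gfl q i : ℤ) = ⌊(i : ℝ) / q⌋ := Int.toNat_of_nonneg (Int.floor_nonneg.mpr h0)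
  rw [this]
  exact ⟨Int.floor_le _, Int.lt_floor_add_one _⟩

lemma st_gfl_zero (q : ℝ) : gfl q 0 = 0 := by simp [gfl]

lemma st_gfl_gap {q : ℝ} (hq : 0 < q) (hq2 : q ≤ 1 / 2) (i : ℕ) :
    gfl q i + 2 ≤ gfl q (i + 1) := by
  have h2 : (2 : ℝ) ≤ 1 / q := by
    rw [le_div_iff₀ hq]; linarith
  have h1 := st_gfl_cast hq i
  have h3 : ((gfl q i : ℤ) : ℝ) + 2 ≤ ((i : ℕ) + 1 : ℝ) / q := by
    have : ((i : ℕ) + 1 : ℝ) / q = (i : ℝ) / q + 1 / q := by ring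
    rw [this]; linarith [h1.1]
  have h4 : ((gfl q i + 2 : ℕ) : ℤ) ≤ ⌊((i : ℕ) + 1 : ℝ) / q⌋ := by
    apply Int.le_floor.mpr
    push_cast
    push_cast at h3
    linarith
  have h5 : (gfl q (i+1) : ℤ) = ⌊(((i+1 : ℕ)) : ℝ) / q⌋ := by
    have h0 : (0 : ℝ) ≤ ((i+1 : ℕ) : ℝ) / q := by positivity
    exact Int.toNat_of_nonneg (Int.floor_nonneg.mpr h0)
  have : ((gfl q i + 2 : ℕ) : ℤ) ≤ (gfl q (i+1) : ℤ) := by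
    rw [h5]; convert h4 using 3; push_cast; ring
  exact_mod_cast this

lemma st_gfl_mono {q : ℝ} (hq : 0 < q) (hq2 : q ≤ 1 / 2) {i j : ℕ} (h : i < j) :
    gfl q i + 2 ≤ gfl q j := by
  induction j with
  | zero => omega
  | succ n ih =>
    rcases Nat.lt_succ_iff_lt_or_eq.mp h with h' | h'
    · have := st_gfl_gap hq hq2 n
      have := ih h'
      omega
    · subst h'; exact st_gfl_gap hq hq2 i

lemma st_gfl_ge {q : ℝ} (hq : 0 < q) (hq2 : q ≤ 1 / 2) (i : ℕ) : 2 * i ≤ gfl q i := by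
  induction i with
  | zero => simp
  | succ n ih => have := st_gfl_gap hq hq2 n; omega

lemma st_gfl_one {q : ℝ} (hq : 0 < q) (hq2 : q ≤ 1 / 2) : 2 ≤ gfl q 1 := by
  have := st_gfl_ge hq hq2 1; omega

lemma st_gfl_superadd {q : ℝ} (hq : 0 < q) (i j : ℕ) :
    gfl q i + gfl q j ≤ gfl q (i + j) ∧ gfl q (i + j) ≤ gfl q i + gfl q j + 1 := by
  have hi := st_gfl_cast hq i
  have hj := st_gfl_cast hq j
  have hij := st_gfl_cast hq (i + j)
  have hsum : ((i : ℝ) + (j : ℝ)) / q = (i : ℝ) / q + (j : ℝ) / q := add_div _ _ _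
  push_cast at hi hj hij
  constructor
  · have h2 : ((gfl q i : ℕ) : ℝ) + (gfl q j : ℕ) < (gfl q (i+j) : ℕ) + 1 := by
      rw [hsum] at hij
      linarith [hi.1, hj.1, hij.2]
    have : (gfl q i + gfl q j : ℕ) < gfl q (i+j) + 1 := by
      have := h2; push_cast at this; exact_mod_cast this
    omega
  · have h2 : ((gfl q (i + j) : ℕ) : ℝ) < ((gfl q i : ℕ) : ℝ) + (gfl q j : ℕ) + 1 + 1 := by
      rw [hsum] at hij
      linarith [hij.1, hi.2, hj.2]
    have : (gfl q (i + j) : ℕ) < (gfl q i + gfl q j + 1) + 1 := by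
      push_cast; exact_mod_cast h2
    omega

lemma st_kap_one {q : ℝ} (hq : 0 < q) (hq2 : q ≤ 1 / 2) : kap q 1 + 1 = gfl q 1 := by
  have h2 : (2 : ℤ) ≤ ⌊1 / q⌋ := by
    apply Int.le_floor.mpr
    rw [le_div_iff₀ hq]; norm_num; linarith
  have hg : gfl q 1 = (⌊(1:ℝ) / q⌋).toNat := by
    simp only [gfl, Nat.cast_one]
  have hk : kap q 1 = (⌊(1:ℝ) / q⌋ - 1).toNat := by
    simp only [kap, reduceIte]
  omega

lemma st_kap_succ {q : ℝ} (hq : 0 < q) (hq2 : q ≤ 1 / 2) (i : ℕ) (hi : 1 ≤ i) :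
    gfl q i + 2 + kap q (i + 1) = gfl q (i + 1) := by
  have hne : i + 1 ≠ 1 := by omega
  have hcast : (((i + 1 : ℕ)) : ℝ) - 1 = (i : ℝ) := by push_cast; ring
  have hgap := st_gfl_gap hq hq2 i
  have hii : (gfl q i : ℤ) = ⌊(i : ℝ) / q⌋ :=
    Int.toNat_of_nonneg (Int.floor_nonneg.mpr (by positivity))
  have hii1 : (gfl q (i+1) : ℤ) = ⌊((i+1 : ℕ) : ℝ) / q⌋ :=
    Int.toNat_of_nonneg (Int.floor_nonneg.mpr (by positivity))
  simp only [kap, if_neg hne, hcast]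
  omega

end Gfl

section TailBody

lemma st_getD_replicate {a d : Fin 2} {n m : ℕ} :
    (List.replicate n a).getD m d = if m < n then a else d := by
  rw [List.getD_eq_getElem?_getD, List.getElem?_replicate]
  split <;> rfl

lemma st_fin2_not_one {a : Fin 2} : ¬ a = 1 ↔ a = 0 := by revert a; decide

lemma st_gfl_le_of_le {q : ℝ} (hq : 0 < q) (hq2 : q ≤ 1 / 2) {i j : ℕ} (h : i ≤ j) :
    gfl q i ≤ gfl q j := by
  rcases Nat.eq_or_lt_of_le h with h' | h'
  · rw [h']
  · have := st_gfl_mono hq hq2 h'; omega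

lemma st_tailBody_succ (q : ℝ) (j M : ℕ) :
    tailBody q j (M + 1) =
      tailBody q j M ++ (1 :: 1 :: List.replicate (kap q (j + 1 + M)) 0) := by
  simp [tailBody, List.range_succ, List.append_assoc]

lemma st_tailBody_len {q : ℝ} (hq : 0 < q) (hq2 : q ≤ 1 / 2) (M : ℕ) :
    (tailBody q 1 M).length = gfl q (M + 1) := by
  induction M with
  | zero =>
    have h1 := st_kap_one hq hq2
    simp [tailBody]
    omega
  | succ n ih =>
    rw [st_tailBody_succ]
    have h2 := st_kap_succ hq hq2 (n + 1) (by omega)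
    have hidx : 1 + 1 + n = (n + 1) + 1 := by omega
    simp only [List.length_append, ih, List.length_cons, List.length_replicate, hidx]
    omega

lemma st_tailBody_getD {q : ℝ} (hq : 0 < q) (hq2 : q ≤ 1 / 2) (M : ℕ) :
    ∀ n, n < gfl q (M + 1) →
      ((tailBody q 1 M).getD n 0 = 1 ↔
        n = 0 ∨ ∃ i, 1 ≤ i ∧ i ≤ M ∧ (n = gfl q i ∨ n = gfl q i + 1)) := by
  induction M with
  | zero =>
    intro n hn
    have hn' : n < gfl q 1 := by simpa using hn
    have hk1 := st_kap_one hq hq2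
    have hval : (tailBody q 1 0).getD n 0 = if n = 0 then 1 else 0 := by
      rcases n with _ | k
      · simp [tailBody]
      · have hk : k < kap q 1 := by omega
        simp only [tailBody, List.range_zero, List.map_nil, List.flatten_nil,
          List.append_nil, List.getD_cons_succ]
        rw [st_getD_replicate, if_pos hk]
        simp
    rw [hval]
    constructor
    · intro h
      split at h
      · left; assumption
      · exact absurd h (by decide)
    · rintro (h | ⟨i, hi1, hi0, hi⟩)
      · simp [h]
      · omega
  | succ m ih =>
    intro n hn
    have hlen := st_tailBody_len hq hq2 m
    have hgap := st_gfl_gap hq hq2 (m + 1)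
    have hks := st_kap_succ hq hq2 (m + 1) (by omega)
    simp only [show m + 1 + 1 = m + 2 by omega] at hn hks hgap
    rcases lt_or_ge n (gfl q (m + 1)) with hnl | hnl
    · rw [st_tailBody_succ, List.getD_append _ _ _ _ (by omega), ih n hnl]
      constructor
      · rintro (h | ⟨i, hi1, him, hi⟩)
        · exact Or.inl h
        · exact Or.inr ⟨i, hi1, by omega, hi⟩
      · rintro (h | ⟨i, hi1, him, hi⟩)
        · exact Or.inl h
        · refine Or.inr ⟨i, hi1, ?_, hi⟩
          rcases Nat.lt_succ_iff_lt_or_eq.mp (Nat.lt_succ_of_le him) with h' | h'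
          · omega
          · exfalso
            have : gfl q i = gfl q (m+1) := by rw [h']
            omega
    · rw [st_tailBody_succ, List.getD_append_right _ _ _ _ (by omega), hlen]
      have hidx : 1 + 1 + m = m + 2 := by omega
      rw [hidx]
      set k := n - gfl q (m + 1) with hk
      have hkb : k < 2 + kap q (m + 2) := by omega
      have hval : (1 :: 1 :: List.replicate (kap q (m + 2)) (0 : Fin 2)).getD k 0
          = if k ≤ 1 then 1 else 0 := by
        rcases k with _ | k1
        · simp
        · rcases k1 with _ | k2
          · simp
          · simp only [List.getD_cons_succ]
            rw [st_getD_replicate, if_pos (by omega)]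
            simp
      rw [hval]
      have hn2 : 2 ≤ gfl q (m + 1) := le_trans (st_gfl_one hq hq2) (st_gfl_le_of_le hq hq2 (by omega))
      constructor
      · intro h
        split at h
        · right
          refine ⟨m + 1, by omega, le_rfl, ?_⟩
          omega
        · exact absurd h (by decide)
      · rintro (h | ⟨i, hi1, him, hi⟩)
        · omega
        · rcases Nat.lt_succ_iff_lt_or_eq.mp (Nat.lt_succ_of_le him) with h' | h'
          · exfalso
            have : gfl q i + 2 ≤ gfl q (m + 1) := st_gfl_mono hq hq2 h'
            omega
          · subst h'
            rw [if_pos (by omega)]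

lemma st_tailSeq_char {q : ℝ} (hq : 0 < q) (hq2 : q ≤ 1 / 2) (n : ℕ) :
    tailSeq q 1 n = 1 ↔ (n = 0 ∨ ∃ i, 1 ≤ i ∧ (n = gfl q i ∨ n = gfl q i + 1)) := by
  have hge := st_gfl_ge hq hq2 (n + 2)
  have hn : n < gfl q (n + 2) := by omega
  have hch := st_tailBody_getD hq hq2 (n + 1) n hn
  rw [show tailSeq q 1 n = (tailBody q 1 (n + 1)).getD n 0 from rfl, hch]
  constructor
  · rintro (h | ⟨i, hi1, _, hi⟩)
    · exact Or.inl h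
    · exact Or.inr ⟨i, hi1, hi⟩
  · rintro (h | ⟨i, hi1, hi⟩)
    · exact Or.inl h
    · refine Or.inr ⟨i, hi1, ?_, hi⟩
      have := st_gfl_ge hq hq2 i
      omega

end TailBody

section CqChar

lemma st_rat_cast_pos {p : ℚ} (hp : 0 < p) : (0 : ℝ) < (p : ℝ) := by exact_mod_cast hp

lemma st_rat_cast_half {p : ℚ} (hp : p ≤ 1 / 2) : (p : ℝ) ≤ 1 / 2 := by
  have h := (Rat.cast_le (K := ℝ)).mpr hp
  push_cast at h
  exact h

lemma st_rat_gfl_den {p : ℚ} (hp : 0 < p) : gfl (p : ℝ) p.num.toNat = p.den := by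
  have hnum : 0 < p.num := Rat.num_pos.mpr hp
  have hcast : ((p.num.toNat : ℕ) : ℝ) = (p.num : ℝ) := by
    exact_mod_cast Int.toNat_of_nonneg hnum.le
  have hden : (0 : ℝ) < (p.den : ℝ) := by
    exact_mod_cast Nat.pos_of_ne_zero p.den_nz
  have hq : (p : ℝ) = (p.num : ℝ) / (p.den : ℝ) := by
    rw [Rat.cast_def]
  have hratio : ((p.num.toNat : ℕ) : ℝ) / (p : ℝ) = (p.den : ℝ) := by
    rw [hcast, hq]
    have hnum' : (p.num : ℝ) ≠ 0 := by positivity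
    field_simp
  simp only [gfl, hratio]
  simp

lemma st_num_pos {p : ℚ} (hp : 0 < p) : 1 ≤ p.num.toNat := by
  have := Rat.num_pos.mpr hp; omega

lemma st_cqW_len {p : ℚ} (hp : 0 < p) (hp2 : p ≤ 1 / 2) :
    (cqWord (p : ℝ) p.num.toNat ++ [0]).length = p.den + 2 := by
  have h1 := st_tailBody_len (st_rat_cast_pos hp) (st_rat_cast_half hp2) (p.num.toNat - 1)
  have hm := st_num_pos hp
  have hf : p.num.toNat - 1 + 1 = p.num.toNat := by omega
  rw [hf] at h1
  have h2 := st_rat_gfl_den hp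
  simp [cqWord, h1, h2]

lemma st_cqW_getD {p : ℚ} (hp : 0 < p) (hp2 : p ≤ 1 / 2) :
    ∀ k, k < p.den + 2 →
      ((cqWord (p : ℝ) p.num.toNat ++ [0]).getD k 0 = 1 ↔
        (k = 0 ∨ k = p.den ∨
          ∃ i, 1 ≤ i ∧ i + 1 ≤ p.num.toNat ∧ (k = gfl (p : ℝ) i ∨ k = gfl (p : ℝ) i + 1))) := by
  intro k hk
  have hq := st_rat_cast_pos hp
  have hq2 := st_rat_cast_half hp2
  have hm := st_num_pos hp
  set m := p.num.toNat with hmdef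
  have hf : m - 1 + 1 = m := by omega
  have hlen := st_tailBody_len hq hq2 (m - 1)
  rw [hf] at hlen
  have hden := st_rat_gfl_den hp
  rw [← hmdef] at hden
  have hW : cqWord (p : ℝ) m ++ [0] = tailBody (p : ℝ) 1 (m - 1) ++ [1, 0] := by
    simp [cqWord, List.append_assoc]
  rw [hW]
  have hdpos : 0 < p.den := p.pos
  rcases lt_or_ge k p.den with hkd | hkd
  · rw [List.getD_append _ _ _ _ (by omega)]
    have hb : k < gfl (p : ℝ) (m - 1 + 1) := by rw [hf]; omega
    have hch := st_tailBody_getD hq hq2 (m - 1) k hb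
    rw [hch]
    constructor
    · rintro (h | ⟨i, hi1, him, hi⟩)
      · exact Or.inl h
      · exact Or.inr (Or.inr ⟨i, hi1, by omega, hi⟩)
    · rintro (h | h | ⟨i, hi1, him, hi⟩)
      · exact Or.inl h
      · omega
      · exact Or.inr ⟨i, hi1, by omega, hi⟩
  · rw [List.getD_append_right _ _ _ _ (by omega), hlen, hden]
    have hval : ([1, 0] : List (Fin 2)).getD (k - p.den) 0 = if k = p.den then 1 else 0 := by
      rcases Nat.eq_or_lt_of_le hkd with h' | h'
      · rw [← h']; simp
      · have h1 : k - p.den = 1 := by omega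
        rw [h1, if_neg (by omega)]
        rfl
    rw [hval]
    constructor
    · intro h
      split at h
      · exact Or.inr (Or.inl (by assumption))
      · exact absurd h (by decide)
    · rintro (h | h | ⟨i, hi1, him, hi⟩)
      · omega
      · rw [if_pos h]
      · exfalso
        have h1 : gfl (p : ℝ) i + 2 ≤ gfl (p : ℝ) m := st_gfl_mono hq hq2 (by omega)
        rcases hi with h | h <;> omega

lemma st_beta_eval {p : ℚ} (hp : 0 < p) (hp2 : p ≤ 1 / 2) (k : ℕ) (hk : k < p.den + 2) :
    perSeq (cqWord (p : ℝ) p.num.toNat ++ [0]) k =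
      (cqWord (p : ℝ) p.num.toNat ++ [0]).getD k 0 := by
  have hlen := st_cqW_len hp hp2
  simp only [perSeq, hlen, Nat.mod_eq_of_lt hk]

end CqChar

section Counting

lemma st_sum_indicator (α : Bseq) (g : ℕ → ℕ) (J p : ℕ) (hJ : 1 ≤ J) (hp0 : 0 < p)
    (hchar : ∀ k, k < p → (α k = 1 ↔ k = 0 ∨ ∃ i, 1 ≤ i ∧ i < J ∧ (k = g i ∨ k = g i + 1)))
    (hmono : ∀ i j, 1 ≤ i → i < j → j < J → g i + 2 ≤ g j)
    (hg2 : ∀ i, 1 ≤ i → i < J → 2 ≤ g i)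
    (hlt : ∀ i, 1 ≤ i → i < J → g i + 1 < p) :
    ∑ k ∈ Finset.range p, ((α k : ℕ)) = 2 * J - 1 := by
  classical
  have hsum : ∑ k ∈ Finset.range p, ((α k : ℕ)) =
      ∑ k ∈ Finset.range p, (if α k = 1 then 1 else 0) := by
    refine Finset.sum_congr rfl fun k _ => ?_
    rcases st_fin2_cases (α k) with h | h <;> simp [h]
  rw [hsum, ← Finset.card_filter]
  have hset : Finset.filter (fun k => α k = 1) (Finset.range p) =
      insert 0 ((Finset.Ico 1 J).biUnion fun i => {g i, g i + 1}) := by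
    ext k
    simp only [Finset.mem_filter, Finset.mem_range, Finset.mem_insert, Finset.mem_biUnion,
      Finset.mem_Ico, Finset.mem_singleton]
    constructor
    · rintro ⟨hk, hk1⟩
      rcases (hchar k hk).mp hk1 with h | ⟨i, hi1, hiJ, hi⟩
      · exact Or.inl h
      · exact Or.inr ⟨i, ⟨hi1, hiJ⟩, by tauto⟩
    · rintro (h | ⟨i, ⟨hi1, hiJ⟩, hi⟩)
      · subst h
        exact ⟨hp0, (hchar 0 hp0).mpr (Or.inl rfl)⟩
      · have hkp : k < p := by
          have := hlt i hi1 hiJ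
          rcases hi with h | h <;> omega
        exact ⟨hkp, (hchar k hkp).mpr (Or.inr ⟨i, hi1, hiJ, by tauto⟩)⟩
  rw [hset]
  have hnotmem : (0 : ℕ) ∉ (Finset.Ico 1 J).biUnion fun i => ({g i, g i + 1} : Finset ℕ) := by
    simp only [Finset.mem_biUnion, Finset.mem_Ico, Finset.mem_insert, Finset.mem_singleton]
    rintro ⟨i, ⟨hi1, hiJ⟩, h | h⟩
    · have := hg2 i hi1 hiJ; omega
    · omega
  rw [Finset.card_insert_of_notMem hnotmem]
  rw [Finset.card_biUnion]
  · have hcard : ∀ i ∈ Finset.Ico 1 J, ({g i, g i + 1} : Finset ℕ).card = 2 := by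
      intro i _
      rw [Finset.card_insert_of_notMem (by simp), Finset.card_singleton]
    rw [Finset.sum_congr rfl hcard, Finset.sum_const, Nat.card_Ico, smul_eq_mul]
    omega
  · intro x hx y hy hxy
    simp only [Finset.mem_coe, Finset.mem_Ico] at hx hy
    have hdis : ∀ a b : ℕ, 1 ≤ a → a < b → b < J →
        Disjoint ({g a, g a + 1} : Finset ℕ) {g b, g b + 1} := by
      intro a b ha hab hbJ
      have := hmono a b ha hab hbJ
      simp only [Finset.disjoint_left, Finset.mem_insert, Finset.mem_singleton]
      rintro x (h | h) (h' | h') <;> omega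
    rcases lt_or_gt_of_ne hxy with h | h
    · exact hdis x y hx.1 h hy.2
    · exact (hdis y x hy.1 h hx.2).symm

end Counting

section Fract

lemma st_floor_add_of_fract {x y : ℝ} (h : Int.fract x + Int.fract y < 1) :
    ⌊x + y⌋ = ⌊x⌋ + ⌊y⌋ := by
  have hxy : x + y = ((⌊x⌋ + ⌊y⌋ : ℤ) : ℝ) + (Int.fract x + Int.fract y) := by
    push_cast
    rw [Int.fract, Int.fract]
    ring
  rw [hxy, Int.floor_intCast_add]
  have h0 : ⌊Int.fract x + Int.fract y⌋ = 0 := by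
    rw [Int.floor_eq_zero_iff]
    refine ⟨by linarith [Int.fract_nonneg x, Int.fract_nonneg y], h⟩
  omega

set_option maxHeartbeats 1000000 in
lemma st_exists_fract_lt {θ : ℝ} (hθ : Irrational θ) {c : ℝ} (hc : 0 < c) :
    ∃ j : ℕ, 1 ≤ j ∧ Int.fract ((j : ℝ) * θ) < c := by
  obtain ⟨N, hNpos, hNc⟩ : ∃ N : ℕ, 0 < N ∧ 1 / (N : ℝ) < c := by
    obtain ⟨n, hn⟩ := exists_nat_one_div_lt hc
    exact ⟨n + 1, by omega, by push_cast; exact hn⟩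
  have hNR : (0 : ℝ) < (N : ℝ) := by exact_mod_cast hNpos
  have hmap : ∀ a ∈ Finset.range (N + 1),
      (⌊(N : ℝ) * Int.fract ((a : ℝ) * θ)⌋).toNat ∈ Finset.range N := by
    intro a _
    simp only [Finset.mem_range]
    have h1 : (N : ℝ) * Int.fract ((a : ℝ) * θ) < N := by
      have := Int.fract_lt_one ((a : ℝ) * θ)
      have := Int.fract_nonneg ((a : ℝ) * θ)
      nlinarith
    have h2 : ⌊(N : ℝ) * Int.fract ((a : ℝ) * θ)⌋ < (N : ℤ) := by
      apply Int.floor_lt.mpr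
      push_cast
      exact h1
    omega
  obtain ⟨a, ha, b, hb, hab, heq⟩ := Finset.exists_ne_map_eq_of_card_lt_of_maps_to
    (by simp) hmap
  clear ha hb
  have key : ∀ a b : ℕ, a < b →
      (⌊(N : ℝ) * Int.fract ((a : ℝ) * θ)⌋).toNat = (⌊(N : ℝ) * Int.fract ((b : ℝ) * θ)⌋).toNat →
      ∃ j : ℕ, 1 ≤ j ∧ Int.fract ((j : ℝ) * θ) < c := by
    clear hab heq a b
    intro a b hab heq
    set fa := Int.fract ((a : ℝ) * θ) with hfa
    set fb := Int.fract ((b : ℝ) * θ) with hfb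
    have hfa0 : 0 ≤ fa := Int.fract_nonneg _
    have hfb0 : 0 ≤ fb := Int.fract_nonneg _
    have hfa1 : fa < 1 := Int.fract_lt_one _
    have hfb1 : fb < 1 := Int.fract_lt_one _
    clear_value fa fb
    have hfloor : ⌊(N : ℝ) * fa⌋ = ⌊(N : ℝ) * fb⌋ := by
      have h1 : 0 ≤ ⌊(N : ℝ) * fa⌋ := Int.floor_nonneg.mpr (by positivity)
      have h2 : 0 ≤ ⌊(N : ℝ) * fb⌋ := Int.floor_nonneg.mpr (by positivity)
      omega
    have hdiff1 : fb - fa < 1 / N := by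
      rw [lt_div_iff₀ hNR]
      have h2 := Int.lt_floor_add_one ((N : ℝ) * fb)
      have h3 := Int.floor_le ((N : ℝ) * fa)
      rw [← hfloor] at h2
      nlinarith
    have hdiff2 : fa - fb < 1 / N := by
      rw [lt_div_iff₀ hNR]
      have h2 := Int.lt_floor_add_one ((N : ℝ) * fa)
      have h3 := Int.floor_le ((N : ℝ) * fb)
      rw [hfloor] at h2
      nlinarith
    set d : ℕ := b - a with hd
    have hd1 : 1 ≤ d := by omega
    have hdcast : ((d : ℕ) : ℝ) = (b : ℝ) - (a : ℝ) := by
      rw [hd]; exact_mod_cast Nat.cast_sub hab.le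
    clear_value d
    have hsplit : (d : ℝ) * θ = ((⌊(b : ℝ) * θ⌋ - ⌊(a : ℝ) * θ⌋ : ℤ) : ℝ) + (fb - fa) := by
      push_cast
      rw [hfb, hfa, Int.fract, Int.fract, hdcast]
      ring
    have hfd : Int.fract ((d : ℝ) * θ) = Int.fract (fb - fa) := by
      rw [hsplit, Int.fract_intCast_add]
    rcases le_or_gt fa fb with hcase | hcase
    · refine ⟨d, hd1, ?_⟩
      have heq2 : Int.fract (fb - fa) = fb - fa :=
        Int.fract_eq_self.mpr ⟨by linarith, by linarith⟩
      rw [hfd, heq2]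
      linarith
    · -- carry case
      set s := fa - fb with hs
      have hs0 : 0 < s := by rw [hs]; linarith
      have hsN : s < 1 / N := by rw [hs]; linarith
      clear_value s
      have hfd1 : Int.fract ((d : ℝ) * θ) = 1 - s := by
        rw [hfd]
        have h1 : fb - fa = (1 - s) + ((-1 : ℤ) : ℝ) := by push_cast; rw [hs]; ring
        rw [h1, Int.fract_add_intCast, Int.fract_eq_self.mpr ⟨by linarith, by linarith⟩]
      have hdθirr : Irrational ((d : ℝ) * θ) := by
        have hcast : ((d : ℕ) : ℝ) * θ = ((d : ℤ) : ℝ) * θ := by push_cast; ring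
        rw [hcast]
        exact hθ.intCast_mul (by exact_mod_cast (show (d : ℤ) ≠ 0 by omega))
      have hsirr : Irrational s := by
        have h2 : s = ((1 + ⌊(d : ℝ) * θ⌋ : ℤ) : ℝ) - (d : ℝ) * θ := by
          have h3 : s = 1 - Int.fract ((d : ℝ) * θ) := by rw [hfd1]; ring
          rw [h3, Int.fract]
          push_cast
          ring
        rw [h2]
        exact hdθirr.intCast_sub _
      have hs1 : s < 1 := by
        have hN1 : 1 / (N : ℝ) ≤ 1 := by
          rw [div_le_one hNR]; exact_mod_cast hNpos
        linarith
      obtain ⟨K, hK1, hKle, hKgt⟩ : ∃ K : ℕ, 1 ≤ K ∧ (K : ℝ) ≤ 1 / s ∧ 1 / s < (K : ℝ) + 1 := by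
        refine ⟨(⌊1 / s⌋).toNat, ?_, ?_, ?_⟩
        · have h1 : (1 : ℤ) ≤ ⌊1 / s⌋ := by
            rw [Int.le_floor]
            push_cast
            rw [le_div_iff₀ hs0]
            linarith
          omega
        · have h1 : (0 : ℤ) ≤ ⌊1 / s⌋ := by
            apply Int.floor_nonneg.mpr; positivity
          have h2 : (((⌊1 / s⌋).toNat : ℕ) : ℝ) = ((⌊1 / s⌋ : ℤ) : ℝ) := by
            exact_mod_cast Int.toNat_of_nonneg h1
          rw [h2]
          exact Int.floor_le _
        · have h1 : (0 : ℤ) ≤ ⌊1 / s⌋ := by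
            apply Int.floor_nonneg.mpr; positivity
          have h2 : (((⌊1 / s⌋).toNat : ℕ) : ℝ) = ((⌊1 / s⌋ : ℤ) : ℝ) := by
            exact_mod_cast Int.toNat_of_nonneg h1
          rw [h2]
          exact Int.lt_floor_add_one _
      have hKR : (0 : ℝ) < (K : ℝ) := by exact_mod_cast hK1
      have hKs : (K : ℝ) * s < 1 := by
        have h1 : (K : ℝ) * s ≤ 1 := (le_div_iff₀ hs0).mp hKle
        rcases lt_or_eq_of_le h1 with h | h
        · exact h
        · exfalso
          have hKne : (K : ℝ) ≠ 0 := ne_of_gt hKR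
          have hseq : s = (((K : ℚ)⁻¹ : ℚ) : ℝ) := by
            push_cast
            field_simp
            linarith
          exact hsirr.ne_rat _ hseq
      have hK1s : 1 < ((K : ℝ) + 1) * s := by
        calc (1 : ℝ) = (1 / s) * s := by field_simp
          _ < ((K : ℝ) + 1) * s := mul_lt_mul_of_pos_right hKgt hs0
      have hclaim : ∀ k : ℕ, 1 ≤ k → (k : ℝ) * s < 1 →
          Int.fract (((k * d : ℕ) : ℝ) * θ) = 1 - (k : ℝ) * s := by
        intro k
        induction k with
        | zero => omega
        | succ t iht =>
          intro _ hks
          rcases Nat.eq_zero_or_pos t with ht0 | ht1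
          · subst ht0
            have h1 : ((1 * d : ℕ) : ℝ) = (d : ℝ) := by push_cast; ring
            rw [h1, hfd1]
            push_cast
            ring
          · have hcast : ((t + 1 : ℕ) : ℝ) = (t : ℝ) + 1 := by push_cast; ring
            rw [hcast] at hks
            have hts : (t : ℝ) * s < 1 := by nlinarith
            have ih := iht ht1 hts
            have hsplit2 : (((t + 1) * d : ℕ) : ℝ) * θ = ((t * d : ℕ) : ℝ) * θ + (d : ℝ) * θ := by
              push_cast; ring
            have hx : ((t * d : ℕ) : ℝ) * θ = (⌊((t * d : ℕ) : ℝ) * θ⌋ : ℝ) + (1 - (t : ℝ) * s) := by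
              rw [← ih, Int.fract]; ring
            have hy : (d : ℝ) * θ = (⌊(d : ℝ) * θ⌋ : ℝ) + (1 - s) := by
              rw [← hfd1, Int.fract]; ring
            have hterm : ((t * d : ℕ) : ℝ) * θ + (d : ℝ) * θ =
                ((⌊((t * d : ℕ) : ℝ) * θ⌋ + ⌊(d : ℝ) * θ⌋ + 1 : ℤ) : ℝ) +
                  (1 - ((t : ℝ) + 1) * s) := by
              nth_rewrite 1 [hx]
              nth_rewrite 1 [hy]
              push_cast
              ring
            have hpos : 0 < ((t : ℝ) + 1) * s := by positivity
            have hfe : Int.fract (1 - ((t : ℝ) + 1) * s) = 1 - ((t : ℝ) + 1) * s :=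
              Int.fract_eq_self.mpr ⟨by linarith, by linarith⟩
            rw [hsplit2, hterm, Int.fract_intCast_add, hfe, hcast]
      refine ⟨K * d, by simpa using Nat.mul_le_mul hK1 hd1, ?_⟩
      have hres := hclaim K hK1 hKs
      rw [hres]
      nlinarith
  rcases lt_or_gt_of_ne hab with h | h
  · exact key a b h heq
  · exact key b a h heq.symm

end Fract

section Maximality

lemma st_eq_of_iff_one {a b : Fin 2} (h : a = 1 ↔ b = 1) : a = b := by
  rcases st_fin2_cases a with h1 | h1 <;> rcases st_fin2_cases b with h2 | h2 <;> subst h1 <;> subst h2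
  · rfl
  · exact absurd (h.mpr rfl) (by decide)
  · exact absurd (h.mp rfl) (by decide)
  · rfl

lemma st_alpha_zero {q : ℝ} (h0 : 0 < q) (hq2 : q ≤ 1 / 2) : tailSeq q 1 0 = 1 :=
  (st_tailSeq_char h0 hq2 0).mpr (Or.inl rfl)

lemma st_alpha_one {q : ℝ} (h0 : 0 < q) (hq2 : q ≤ 1 / 2) : tailSeq q 1 1 = 0 := by
  rw [← st_fin2_not_one]
  intro h
  rcases (st_tailSeq_char h0 hq2 1).mp h with h' | ⟨i, hi1, h' | h'⟩
  · omega
  · have := st_gfl_ge h0 hq2 i; omega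
  · have := st_gfl_ge h0 hq2 i; omega

lemma st_exists_nocarry {q : ℝ} (h0 : 0 < q) (hirr : Irrational q) (i : ℕ) :
    ∃ j : ℕ, 1 ≤ j ∧ gfl q (i + j) = gfl q i + gfl q j := by
  have hθ : Irrational (1 / q) := by
    rw [one_div]; exact hirr.inv
  have hfr : Int.fract ((i : ℝ) * (1 / q)) < 1 := Int.fract_lt_one _
  obtain ⟨j, hj1, hj⟩ := st_exists_fract_lt hθ (c := 1 - Int.fract ((i : ℝ) * (1 / q)))
    (by linarith)
  refine ⟨j, hj1, ?_⟩
  have hfloor : ⌊((i : ℝ) + (j : ℝ)) / q⌋ = ⌊(i : ℝ) / q⌋ + ⌊(j : ℝ) / q⌋ := by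
    have h1 : ((i : ℝ) + (j : ℝ)) / q = (i : ℝ) * (1 / q) + (j : ℝ) * (1 / q) := by ring
    have h2 : (i : ℝ) / q = (i : ℝ) * (1 / q) := by ring
    have h3 : (j : ℝ) / q = (j : ℝ) * (1 / q) := by ring
    rw [h1, h2, h3]
    exact st_floor_add_of_fract (by linarith)
  have c1 : (gfl q (i + j) : ℤ) = ⌊((i + j : ℕ) : ℝ) / q⌋ :=
    Int.toNat_of_nonneg (Int.floor_nonneg.mpr (by positivity))
  have c2 : (gfl q i : ℤ) = ⌊(i : ℝ) / q⌋ :=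
    Int.toNat_of_nonneg (Int.floor_nonneg.mpr (by positivity))
  have c3 : (gfl q j : ℤ) = ⌊(j : ℝ) / q⌋ :=
    Int.toNat_of_nonneg (Int.floor_nonneg.mpr (by positivity))
  have hcast : ((i + j : ℕ) : ℝ) / q = ((i : ℝ) + (j : ℝ)) / q := by push_cast; ring
  rw [hcast] at c1
  omega

lemma st_first_nocarry {q : ℝ} (h0 : 0 < q) (hq2 : q ≤ 1 / 2) (hirr : Irrational q)
    (i : ℕ) :
    ∃ J : ℕ, 1 ≤ J ∧ gfl q (i + J) = gfl q i + gfl q J ∧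
      (∀ t, 1 ≤ t → t < J → gfl q (i + t) = gfl q i + gfl q t + 1) ∧
      (2 ≤ J → gfl q (J - 1) + 3 ≤ gfl q J) := by
  classical
  let P : ℕ → Prop := fun j => 1 ≤ j ∧ gfl q (i + j) = gfl q i + gfl q j
  have hPex : ∃ j, P j := st_exists_nocarry h0 hirr i
  let J := Nat.find hPex
  have hPJ : P J := Nat.find_spec hPex
  have hmin : ∀ t, t < J → ¬ P t := fun t ht => Nat.find_min hPex ht
  have hprev : ∀ t, 1 ≤ t → t < J → gfl q (i + t) = gfl q i + gfl q t + 1 := by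
    intro t ht1 htJ
    have h1 := st_gfl_superadd h0 i t
    have h2 := hmin t htJ
    simp only [P, not_and] at h2
    have h3 := h2 ht1
    omega
  refine ⟨J, hPJ.1, hPJ.2, hprev, ?_⟩
  intro hJ2
  have h1 := hprev (J - 1) (by omega) (by omega)
  have h2 : gfl q (i + (J - 1)) + 2 ≤ gfl q (i + J) := by
    have h3 := st_gfl_gap h0 hq2 (i + (J - 1))
    rw [show i + (J - 1) + 1 = i + J by omega] at h3
    exact h3
  have h4 := hPJ.2
  omega

lemma st_maximal {q : ℝ} (h0 : 0 < q) (h2 : q < 1 / 2) (hirr : Irrational q) :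
    MaximalSeq (tailSeq q 1) := by
  have hq2 : q ≤ 1 / 2 := le_of_lt h2
  intro r
  rcases Nat.eq_zero_or_pos r with hr0 | hr1
  · right
    subst hr0
    funext i
    rfl
  left
  have hshift : ∀ k, shiftSeq r (tailSeq q 1) k = tailSeq q 1 (k + r) := fun k => rfl
  rcases st_fin2_cases (tailSeq q 1 r) with hα0 | hα1
  · -- shift starts with 0
    refine ⟨0, fun i hi => absurd hi (Nat.not_lt_zero i), ?_, ?_⟩
    · rw [hshift 0, Nat.zero_add, hα0, st_alpha_zero h0 hq2]
      decide
    · rw [Finset.sum_range_one, hshift 0, Nat.zero_add, hα0]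
      decide
  · have hP := (st_tailSeq_char h0 hq2 r).mp hα1
    rcases hP with h | ⟨i, hi1, hri⟩
    · omega
    rcases hri with hgi | hgi1
    · -- r = gfl q i : witness 1
      refine ⟨1, ?_, ?_, ?_⟩
      · intro k hk
        have hk0 : k = 0 := by omega
        subst hk0
        rw [hshift 0, Nat.zero_add, hα1, st_alpha_zero h0 hq2]
      · rw [hshift 1, st_alpha_one h0 hq2]
        have h1 : tailSeq q 1 (1 + r) = 1 := by
          apply (st_tailSeq_char h0 hq2 (1 + r)).mpr
          exact Or.inr ⟨i, hi1, Or.inr (by omega)⟩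
        rw [h1]
        decide
      · have h1 : tailSeq q 1 (1 + r) = 1 := by
          apply (st_tailSeq_char h0 hq2 (1 + r)).mpr
          exact Or.inr ⟨i, hi1, Or.inr (by omega)⟩
        rw [Finset.sum_range_succ, Finset.sum_range_one, hshift 0, hshift 1,
          Nat.zero_add, hα1, h1]
        decide
    · -- r = gfl q i + 1 : Sturmian case
      obtain ⟨J, hJ1, hJeq, hJprev, hJ3⟩ := st_first_nocarry h0 hq2 hirr i
      have hgJ2 : 2 ≤ gfl q J := le_trans (st_gfl_one h0 hq2) (st_gfl_le_of_le h0 hq2 hJ1)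
      set p : ℕ := gfl q J - 1 with hp
      have hp1 : 1 ≤ p := by omega
      -- characterization of the shift below p
      have hfwd : ∀ k, k < p → (shiftSeq r (tailSeq q 1) k = 1 ↔
          k = 0 ∨ ∃ t, 1 ≤ t ∧ t < J ∧ (k = gfl q t ∨ k = gfl q t + 1)) := by
        intro k hk
        rw [hshift k, st_tailSeq_char h0 hq2 (k + r)]
        constructor
        · rintro (h | ⟨u, hu1, hu⟩)
          · omega
          · rcases le_or_gt u i with hui | hui
            · -- u ≤ i forces k = 0
              have hle : gfl q u ≤ gfl q i := st_gfl_le_of_le h0 hq2 hui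
              left
              omega
            · -- u = i + t
              set t : ℕ := u - i with ht
              have ht1 : 1 ≤ t := by omega
              have hut : u = i + t := by omega
              rcases lt_or_ge t J with htJ | htJ
              · have he := hJprev t ht1 htJ
                right
                refine ⟨t, ht1, htJ, ?_⟩
                rw [hut, he] at hu
                omega
              · exfalso
                have h1 : gfl q (i + J) ≤ gfl q u := by
                  rw [hut]
                  exact st_gfl_le_of_le h0 hq2 (by omega)
                omega
        · rintro (h | ⟨t, ht1, htJ, ht⟩)
          · subst h
            exact Or.inr ⟨i, hi1, Or.inr (by omega)⟩
          · have he := hJprev t ht1 htJ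
            refine Or.inr ⟨i + t, by omega, ?_⟩
            omega
      -- α characterization below p
      have hbwd : ∀ k, k < p → (tailSeq q 1 k = 1 ↔
          k = 0 ∨ ∃ t, 1 ≤ t ∧ t < J ∧ (k = gfl q t ∨ k = gfl q t + 1)) := by
        intro k hk
        rw [st_tailSeq_char h0 hq2 k]
        constructor
        · rintro (h | ⟨t, ht1, ht⟩)
          · exact Or.inl h
          · refine Or.inr ⟨t, ht1, ?_, ht⟩
            by_contra hc
            push_neg at hc
            have h1 : gfl q J ≤ gfl q t := st_gfl_le_of_le h0 hq2 hc
            omega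
        · rintro (h | ⟨t, ht1, htJ, ht⟩)
          · exact Or.inl h
          · exact Or.inr ⟨t, ht1, ht⟩
      -- difference at p
      have hshiftp : shiftSeq r (tailSeq q 1) p = 1 := by
        rw [hshift p]
        apply (st_tailSeq_char h0 hq2 (p + r)).mpr
        refine Or.inr ⟨i + J, by omega, Or.inl ?_⟩
        omega
      have hαp : tailSeq q 1 p = 0 := by
        rw [← st_fin2_not_one]
        intro h
        rcases (st_tailSeq_char h0 hq2 p).mp h with h' | ⟨t, ht1, ht⟩
        · omega
        · rcases lt_or_ge t J with htJ | htJ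
          · have hJ2 : 2 ≤ J := by omega
            have h3 := hJ3 hJ2
            have h4 : gfl q t ≤ gfl q (J - 1) := st_gfl_le_of_le h0 hq2 (by omega)
            omega
          · have h4 : gfl q J ≤ gfl q t := st_gfl_le_of_le h0 hq2 htJ
            omega
      refine ⟨p, ?_, ?_, ?_⟩
      · intro k hk
        exact st_eq_of_iff_one ((hfwd k hk).trans (hbwd k hk).symm)
      · rw [hshiftp, hαp]; decide
      · rw [Finset.sum_range_succ]
        have hsum : ∑ k ∈ Finset.range p, ((shiftSeq r (tailSeq q 1) k : ℕ)) = 2 * J - 1 := by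
          apply st_sum_indicator _ (gfl q) J p hJ1 (by omega) hfwd
          · intro a b ha hab hbJ
            exact st_gfl_mono h0 hq2 hab
          · intro t ht1 htJ
            exact le_trans (st_gfl_one h0 hq2) (st_gfl_le_of_le h0 hq2 ht1)
          · intro t ht1 htJ
            rcases Nat.eq_or_lt_of_le htJ with h' | h'
            · have hJ2 : 2 ≤ J := by omega
              have h3 := hJ3 hJ2
              have h4 : gfl q t ≤ gfl q (J - 1) := st_gfl_le_of_le h0 hq2 (by omega)
              omega
            · have hJ2 : 2 ≤ J := by omega
              have h3 := hJ3 hJ2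
              have h4 : gfl q t ≤ gfl q (J - 1) := st_gfl_le_of_le h0 hq2 (by omega)
              omega
        rw [hsum, hshiftp]
        refine ⟨J, by simp; omega⟩

end Maximality

section Compare

/-- The periodic sequence `(c_q 0)^∞` for a rational `q`. -/
noncomputable def stBeta (p : ℚ) : Bseq := perSeq (cqWord (p : ℝ) p.num.toNat ++ [0])

lemma st_beta_char {p : ℚ} (hp : 0 < p) (hp2 : p ≤ 1 / 2) (k : ℕ) (hk : k < p.den + 2) :
    (stBeta p k = 1 ↔ (k = 0 ∨ k = p.den ∨
      ∃ i, 1 ≤ i ∧ i + 1 ≤ p.num.toNat ∧ (k = gfl (p : ℝ) i ∨ k = gfl (p : ℝ) i + 1))) := by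
  rw [stBeta, st_beta_eval hp hp2 k hk]
  exact st_cqW_getD hp hp2 k hk

lemma st_gfl_anti {q q' : ℝ} (h0 : 0 < q) (hle : q ≤ q') (i : ℕ) : gfl q' i ≤ gfl q i := by
  have h1 : (i : ℝ) / q' ≤ (i : ℝ) / q :=
    div_le_div_of_nonneg_left (by positivity) h0 hle
  have h2 : ⌊(i : ℝ) / q'⌋ ≤ ⌊(i : ℝ) / q⌋ := Int.floor_mono h1
  exact Int.toNat_le_toNat h2

lemma st_den_pairs_lt {p : ℚ} (hp : 0 < p) (hp2 : p ≤ 1 / 2) {i : ℕ}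
    (hi1 : 1 ≤ i) (him : i + 1 ≤ p.num.toNat) : gfl (p : ℝ) i + 2 ≤ p.den := by
  have h1 : gfl (p : ℝ) i + 2 ≤ gfl (p : ℝ) p.num.toNat :=
    st_gfl_mono (st_rat_cast_pos hp) (st_rat_cast_half hp2) (by omega)
  rw [st_rat_gfl_den hp] at h1
  exact h1

lemma st_cmp_above {q : ℝ} (h0 : 0 < q) (h2l : q < 1 / 2) {p : ℚ}
    (hpq : q < (p : ℝ)) (hp2 : p ≤ 1 / 2) :
    umLT (stBeta p) (tailSeq q 1) := by
  classical
  have hq2 : q ≤ 1 / 2 := le_of_lt h2l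
  have hp : 0 < p := by
    have : (0 : ℝ) < (p : ℝ) := lt_trans h0 hpq
    exact_mod_cast this
  have hpr := st_rat_cast_pos hp
  have hpr2 := st_rat_cast_half hp2
  have hm1 := st_num_pos hp
  have hgm := st_rat_gfl_den hp
  have hanti : ∀ i, gfl (p : ℝ) i ≤ gfl q i := st_gfl_anti h0 hpq.le
  by_cases hE : ∀ i, i ≤ p.num.toNat → gfl (p : ℝ) i = gfl q i
  · -- no difference within one period: difference at den + 1
    have hgmq : gfl q p.num.toNat = p.den := by rw [← hE _ le_rfl, hgm]
    have hagree : ∀ k, k < p.den + 1 → stBeta p k = tailSeq q 1 k := by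
      intro k hk
      apply st_eq_of_iff_one
      rw [st_beta_char hp hp2 k (by omega), st_tailSeq_char h0 hq2 k]
      constructor
      · rintro (h | h | ⟨i, hi1, him, hi⟩)
        · exact Or.inl h
        · exact Or.inr ⟨p.num.toNat, hm1, Or.inl (by omega)⟩
        · exact Or.inr ⟨i, hi1, by rw [← hE i (by omega)]; exact hi⟩
      · rintro (h | ⟨t, ht1, ht⟩)
        · exact Or.inl h
        · rcases le_or_gt (t + 1) p.num.toNat with htm | htm
          · exact Or.inr (Or.inr ⟨t, ht1, htm, by rw [hE t (by omega)]; exact ht⟩)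
          · rcases Nat.eq_or_lt_of_le htm with h' | h'
            · -- t = m
              have htm' : t = p.num.toNat := by omega
              subst htm'
              rcases ht with h'' | h'' <;> [exact Or.inr (Or.inl (by omega)); omega]
            · exfalso
              have := st_gfl_mono h0 hq2 (show p.num.toNat < t by omega)
              rcases ht with h'' | h'' <;> omega
    have hdiffb : stBeta p (p.den + 1) = 0 := by
      rw [← st_fin2_not_one]
      intro h
      rcases (st_beta_char hp hp2 (p.den + 1) (by omega)).mp h with h' | h' | ⟨i, hi1, him, hi⟩
      · omega
      · omega
      · have := st_den_pairs_lt hp hp2 hi1 him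
        rcases hi with h'' | h'' <;> omega
    have hdiffa : tailSeq q 1 (p.den + 1) = 1 := by
      apply (st_tailSeq_char h0 hq2 _).mpr
      exact Or.inr ⟨p.num.toNat, hm1, Or.inr (by omega)⟩
    refine ⟨p.den + 1, hagree, by rw [hdiffb, hdiffa]; decide, ?_⟩
    have hsum : ∑ k ∈ Finset.range p.den, ((stBeta p k : ℕ)) = 2 * p.num.toNat - 1 := by
      apply st_sum_indicator _ (gfl (p : ℝ)) p.num.toNat p.den hm1 p.pos
      · intro k hk
        rw [st_beta_char hp hp2 k (by omega)]
        constructor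
        · rintro (h | h | ⟨i, hi1, him, hi⟩)
          · exact Or.inl h
          · omega
          · exact Or.inr ⟨i, hi1, by omega, hi⟩
        · rintro (h | ⟨i, hi1, him, hi⟩)
          · exact Or.inl h
          · exact Or.inr (Or.inr ⟨i, hi1, by omega, hi⟩)
      · intro a b ha hab hbJ
        exact st_gfl_mono hpr hpr2 hab
      · intro t ht1 htJ
        exact le_trans (st_gfl_one hpr hpr2) (st_gfl_le_of_le hpr hpr2 ht1)
      · intro t ht1 htJ
        have := st_den_pairs_lt hp hp2 ht1 (by omega)
        omega
    have hbn : stBeta p p.den = 1 :=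
      (st_beta_char hp hp2 p.den (by omega)).mpr (Or.inr (Or.inl rfl))
    rw [show p.den + 1 + 1 = (p.den + 1) + 1 by rfl, Finset.sum_range_succ,
      Finset.sum_range_succ, hsum, hbn, hdiffb]
    refine ⟨p.num.toNat, by simp; omega⟩
  · -- first difference J within the period
    push_neg at hE
    have hPex : ∃ i, gfl (p : ℝ) i ≠ gfl q i := by
      obtain ⟨i, _, hi⟩ := hE
      exact ⟨i, hi⟩
    set J := Nat.find hPex with hJdef
    have hJne : gfl (p : ℝ) J ≠ gfl q J := Nat.find_spec hPex
    have hJmin : ∀ t, t < J → gfl (p : ℝ) t = gfl q t := by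
      intro t ht
      by_contra hc
      have h1 : Nat.find hPex ≤ t := Nat.find_le hc
      rw [← hJdef] at h1
      omega
    have hJ1 : 1 ≤ J := by
      by_contra hc
      have : J = 0 := by omega
      apply hJne
      rw [this, st_gfl_zero, st_gfl_zero]
    have hJm : J ≤ p.num.toNat := by
      obtain ⟨i, him, hi⟩ := hE
      exact le_trans (Nat.find_le hi) him
    have hJlt : gfl (p : ℝ) J < gfl q J := lt_of_le_of_ne (hanti J) hJne
    have hppn : gfl (p : ℝ) J ≤ p.den := by
      rw [← hgm]
      exact st_gfl_le_of_le hpr hpr2 hJm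
    have hgJ2 : 2 ≤ gfl (p : ℝ) J := le_trans (st_gfl_one hpr hpr2) (st_gfl_le_of_le hpr hpr2 hJ1)
    have hdiffb : stBeta p (gfl (p : ℝ) J) = 1 := by
      apply (st_beta_char hp hp2 _ (by omega)).mpr
      rcases Nat.eq_or_lt_of_le hJm with h' | h'
      · rw [h', hgm]
        exact Or.inr (Or.inl rfl)
      · exact Or.inr (Or.inr ⟨J, hJ1, by omega, Or.inl rfl⟩)
    have hdiffa : tailSeq q 1 (gfl (p : ℝ) J) = 0 := by
      rw [← st_fin2_not_one]
      intro h
      rcases (st_tailSeq_char h0 hq2 _).mp h with h' | ⟨t, ht1, ht⟩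
      · omega
      · rcases lt_or_ge t J with htJ | htJ
        · have h1 : gfl (p : ℝ) t + 2 ≤ gfl (p : ℝ) J := st_gfl_mono hpr hpr2 htJ
          have h2 := hJmin t htJ
          rcases ht with h'' | h'' <;> omega
        · have h1 : gfl q J ≤ gfl q t := st_gfl_le_of_le h0 hq2 htJ
          rcases ht with h'' | h'' <;> omega
    have hagree : ∀ k, k < gfl (p : ℝ) J → stBeta p k = tailSeq q 1 k := by
      intro k hk
      apply st_eq_of_iff_one
      rw [st_beta_char hp hp2 k (by omega), st_tailSeq_char h0 hq2 k]
      constructor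
      · rintro (h | h | ⟨i, hi1, him, hi⟩)
        · exact Or.inl h
        · omega
        · rcases lt_or_ge i J with hiJ | hiJ
          · exact Or.inr ⟨i, hi1, by rw [← hJmin i hiJ]; exact hi⟩
          · exfalso
            have h1 : gfl (p : ℝ) J ≤ gfl (p : ℝ) i := st_gfl_le_of_le hpr hpr2 hiJ
            rcases hi with h'' | h'' <;> omega
      · rintro (h | ⟨t, ht1, ht⟩)
        · exact Or.inl h
        · rcases lt_or_ge t J with htJ | htJ
          · exact Or.inr (Or.inr ⟨t, ht1, by omega, by rw [hJmin t htJ]; exact ht⟩)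
          · exfalso
            have h1 : gfl q J ≤ gfl q t := st_gfl_le_of_le h0 hq2 htJ
            rcases ht with h'' | h'' <;> omega
    refine ⟨gfl (p : ℝ) J, hagree, by rw [hdiffb, hdiffa]; decide, ?_⟩
    have hsum : ∑ k ∈ Finset.range (gfl (p : ℝ) J), ((stBeta p k : ℕ)) = 2 * J - 1 := by
      apply st_sum_indicator _ (gfl (p : ℝ)) J (gfl (p : ℝ) J) hJ1 (by omega)
      · intro k hk
        rw [st_beta_char hp hp2 k (by omega)]
        constructor
        · rintro (h | h | ⟨i, hi1, him, hi⟩)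
          · exact Or.inl h
          · omega
          · rcases lt_or_ge i J with hiJ | hiJ
            · exact Or.inr ⟨i, hi1, hiJ, hi⟩
            · exfalso
              have h1 : gfl (p : ℝ) J ≤ gfl (p : ℝ) i := st_gfl_le_of_le hpr hpr2 hiJ
              rcases hi with h'' | h'' <;> omega
        · rintro (h | ⟨i, hi1, hiJ, hi⟩)
          · exact Or.inl h
          · exact Or.inr (Or.inr ⟨i, hi1, by omega, hi⟩)
      · intro a b ha hab hbJ
        exact st_gfl_mono hpr hpr2 hab
      · intro t ht1 htJ
        exact le_trans (st_gfl_one hpr hpr2) (st_gfl_le_of_le hpr hpr2 ht1)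
      · intro t ht1 htJ
        have := st_gfl_mono hpr hpr2 htJ
        omega
    rw [Finset.sum_range_succ, hsum, hdiffb]
    refine ⟨J, by simp; omega⟩

lemma st_cmp_below {q : ℝ} (h0 : 0 < q) (h2l : q < 1 / 2) {p : ℚ} (hp : 0 < p)
    (hpq : (p : ℝ) < q) :
    umLT (tailSeq q 1) (stBeta p) := by
  classical
  have hq2 : q ≤ 1 / 2 := le_of_lt h2l
  have hp2 : p ≤ 1 / 2 := by
    have h1 : (p : ℝ) ≤ 1 / 2 := le_of_lt (lt_trans hpq h2l)
    rw [show (1 / 2 : ℝ) = ((1 / 2 : ℚ) : ℝ) by norm_num] at h1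
    exact_mod_cast h1
  have hpr := st_rat_cast_pos hp
  have hpr2 := st_rat_cast_half hp2
  have hm1 := st_num_pos hp
  have hgm := st_rat_gfl_den hp
  have hanti : ∀ i, gfl q i ≤ gfl (p : ℝ) i := st_gfl_anti hpr hpq.le
  -- difference exists at m
  have hdm : gfl q p.num.toNat < p.den := by
    have h1 : ((p.num.toNat : ℕ) : ℝ) / q < ((p.num.toNat : ℕ) : ℝ) / (p : ℝ) := by
      apply div_lt_div_of_pos_left _ hpr hpq
      have : (0 : ℕ) < p.num.toNat := hm1
      exact_mod_cast this
    have h2 : ((p.num.toNat : ℕ) : ℝ) / (p : ℝ) = (p.den : ℝ) := by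
      have h3 := st_rat_gfl_den hp
      have hnum : 0 < p.num := Rat.num_pos.mpr hp
      have hcast : ((p.num.toNat : ℕ) : ℝ) = (p.num : ℝ) := by
        exact_mod_cast Int.toNat_of_nonneg hnum.le
      rw [hcast, Rat.cast_def]
      have hden : (0 : ℝ) < (p.den : ℝ) := by
        exact_mod_cast Nat.pos_of_ne_zero p.den_nz
      have hnum' : (p.num : ℝ) ≠ 0 := by positivity
      field_simp
    have h4 : ⌊((p.num.toNat : ℕ) : ℝ) / q⌋ < (p.den : ℤ) := by
      have hcast2 : (((p.den : ℤ)) : ℝ) = (p.den : ℝ) := by push_cast; ring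
      rw [Int.floor_lt, hcast2, ← h2]
      exact h1
    have h5 : (gfl q p.num.toNat : ℤ) = ⌊((p.num.toNat : ℕ) : ℝ) / q⌋ :=
      Int.toNat_of_nonneg (Int.floor_nonneg.mpr (by positivity))
    omega
  have hPex : ∃ i, gfl q i ≠ gfl (p : ℝ) i := ⟨p.num.toNat, by omega⟩
  set J := Nat.find hPex with hJdef
  have hJne : gfl q J ≠ gfl (p : ℝ) J := Nat.find_spec hPex
  have hJmin : ∀ t, t < J → gfl q t = gfl (p : ℝ) t := by
    intro t ht
    by_contra hc
    have h1 : Nat.find hPex ≤ t := Nat.find_le hc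
    rw [← hJdef] at h1
    omega
  have hJ1 : 1 ≤ J := by
    by_contra hc
    have h' : J = 0 := by omega
    apply hJne
    rw [h', st_gfl_zero, st_gfl_zero]
  have hJm : J ≤ p.num.toNat := Nat.find_le (by rw [hgm]; omega)
  have hJlt : gfl q J < gfl (p : ℝ) J := lt_of_le_of_ne (hanti J) hJne
  have hppn : gfl (p : ℝ) J ≤ p.den := by
    rw [← hgm]
    exact st_gfl_le_of_le hpr hpr2 hJm
  have hgJ2 : 2 ≤ gfl q J := le_trans (st_gfl_one h0 hq2) (st_gfl_le_of_le h0 hq2 hJ1)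
  have hdiffa : tailSeq q 1 (gfl q J) = 1 :=
    (st_tailSeq_char h0 hq2 _).mpr (Or.inr ⟨J, hJ1, Or.inl rfl⟩)
  have hdiffb : stBeta p (gfl q J) = 0 := by
    rw [← st_fin2_not_one]
    intro h
    rcases (st_beta_char hp hp2 _ (by omega)).mp h with h' | h' | ⟨i, hi1, him, hi⟩
    · omega
    · omega
    · rcases lt_or_ge i J with hiJ | hiJ
      · have h1 : gfl q i + 2 ≤ gfl q J := st_gfl_mono h0 hq2 hiJ
        have h2 := hJmin i hiJ
        rcases hi with h'' | h'' <;> omega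
      · have h1 : gfl (p : ℝ) J ≤ gfl (p : ℝ) i := st_gfl_le_of_le hpr hpr2 hiJ
        rcases hi with h'' | h'' <;> omega
  have hagree : ∀ k, k < gfl q J → tailSeq q 1 k = stBeta p k := by
    intro k hk
    apply st_eq_of_iff_one
    rw [st_beta_char hp hp2 k (by omega), st_tailSeq_char h0 hq2 k]
    constructor
    · rintro (h | ⟨t, ht1, ht⟩)
      · exact Or.inl h
      · rcases lt_or_ge t J with htJ | htJ
        · exact Or.inr (Or.inr ⟨t, ht1, by omega, by rw [← hJmin t htJ]; exact ht⟩)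
        · exfalso
          have h1 : gfl q J ≤ gfl q t := st_gfl_le_of_le h0 hq2 htJ
          rcases ht with h'' | h'' <;> omega
    · rintro (h | h | ⟨i, hi1, him, hi⟩)
      · exact Or.inl h
      · omega
      · rcases lt_or_ge i J with hiJ | hiJ
        · exact Or.inr ⟨i, hi1, by rw [hJmin i hiJ]; exact hi⟩
        · exfalso
          have h1 : gfl (p : ℝ) J ≤ gfl (p : ℝ) i := st_gfl_le_of_le hpr hpr2 hiJ
          rcases hi with h'' | h'' <;> omega
  refine ⟨gfl q J, hagree, by rw [hdiffa, hdiffb]; decide, ?_⟩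
  have hsum : ∑ k ∈ Finset.range (gfl q J), ((tailSeq q 1 k : ℕ)) = 2 * J - 1 := by
    apply st_sum_indicator _ (gfl q) J (gfl q J) hJ1 (by omega)
    · intro k hk
      rw [st_tailSeq_char h0 hq2 k]
      constructor
      · rintro (h | ⟨t, ht1, ht⟩)
        · exact Or.inl h
        · rcases lt_or_ge t J with htJ | htJ
          · exact Or.inr ⟨t, ht1, htJ, ht⟩
          · exfalso
            have h1 : gfl q J ≤ gfl q t := st_gfl_le_of_le h0 hq2 htJ
            rcases ht with h'' | h'' <;> omega
      · rintro (h | ⟨t, ht1, htJ, ht⟩)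
        · exact Or.inl h
        · exact Or.inr ⟨t, ht1, ht⟩
    · intro a b ha hab hbJ
      exact st_gfl_mono h0 hq2 hab
    · intro t ht1 htJ
      exact le_trans (st_gfl_one h0 hq2) (st_gfl_le_of_le h0 hq2 ht1)
    · intro t ht1 htJ
      have := st_gfl_mono h0 hq2 htJ
      omega
  rw [Finset.sum_range_succ, hsum, hdiffa]
  refine ⟨J, by simp; omega⟩

end Compare

section Approx

lemma st_agree_above {q : ℝ} (h0 : 0 < q) (h2 : q < 1 / 2) (hirr : Irrational q) (I : ℕ) :
    ∃ δ : ℝ, 0 < δ ∧ ∀ p : ℚ, q < (p : ℝ) → (p : ℝ) < q + δ →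
      ∀ i ≤ I, gfl (p : ℝ) i = gfl q i := by
  induction I with
  | zero =>
    refine ⟨1, one_pos, fun p _ _ i hi => ?_⟩
    have h' : i = 0 := by omega
    rw [h', st_gfl_zero, st_gfl_zero]
  | succ n ih =>
    obtain ⟨δ, hδ, hI⟩ := ih
    have hx0 : (0 : ℝ) < ((n + 1 : ℕ) : ℝ) := by positivity
    have hx1 : (1 : ℝ) ≤ ((n + 1 : ℕ) : ℝ) := by
      have : (1 : ℕ) ≤ n + 1 := by omega
      exact_mod_cast this
    have hirr2 : Irrational (((n + 1 : ℕ) : ℝ) / q) := by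
      have h1 : ((n + 1 : ℕ) : ℝ) / q = ((n + 1 : ℤ) : ℝ) * q⁻¹ := by push_cast; ring
      rw [h1]
      exact hirr.inv.intCast_mul (by positivity)
    set L : ℤ := ⌊((n + 1 : ℕ) : ℝ) / q⌋ with hL
    have hL0 : 0 < L := by
      have h1 : (1 : ℝ) ≤ ((n + 1 : ℕ) : ℝ) / q := by
        rw [le_div_iff₀ h0]
        linarith
      have h2' : (1 : ℤ) ≤ L := by
        rw [hL, Int.le_floor]
        exact_mod_cast h1
      omega
    have hLR : (0 : ℝ) < (L : ℝ) := by exact_mod_cast hL0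
    have hle : (L : ℝ) ≤ ((n + 1 : ℕ) : ℝ) / q := by rw [hL]; exact Int.floor_le _
    have hlt : (L : ℝ) < ((n + 1 : ℕ) : ℝ) / q := by
      rcases lt_or_eq_of_le hle with h' | h'
      · exact h'
      · exact absurd ⟨(L : ℚ), by push_cast; push_cast at h'; exact h'⟩ hirr2
    have hq' : q < ((n + 1 : ℕ) : ℝ) / (L : ℝ) := by
      rw [lt_div_iff₀ hLR]
      calc q * (L : ℝ) = (L : ℝ) * q := by ring
        _ < (((n + 1 : ℕ) : ℝ) / q) * q := mul_lt_mul_of_pos_right hlt h0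
        _ = ((n + 1 : ℕ) : ℝ) := by field_simp
    refine ⟨min δ (((n + 1 : ℕ) : ℝ) / (L : ℝ) - q), lt_min hδ (by linarith), ?_⟩
    intro p hp1 hp2 i hi
    have hpR : (0 : ℝ) < (p : ℝ) := lt_trans h0 hp1
    rcases Nat.lt_succ_iff_lt_or_eq.mp (Nat.lt_succ_of_le hi) with h' | h'
    · refine hI p hp1 ?_ i (by omega)
      have := min_le_left δ (((n + 1 : ℕ) : ℝ) / (L : ℝ) - q)
      linarith
    · subst h'
      have hupper : ((n + 1 : ℕ) : ℝ) / (p : ℝ) < (L : ℝ) + 1 := by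
        have h1 : ((n + 1 : ℕ) : ℝ) / (p : ℝ) < ((n + 1 : ℕ) : ℝ) / q :=
          div_lt_div_of_pos_left hx0 h0 hp1
        have h2' := Int.lt_floor_add_one (((n + 1 : ℕ) : ℝ) / q)
        rw [← hL] at h2'
        linarith
      have hlower : (L : ℝ) < ((n + 1 : ℕ) : ℝ) / (p : ℝ) := by
        have h1 : (p : ℝ) < ((n + 1 : ℕ) : ℝ) / (L : ℝ) := by
          have := min_le_right δ (((n + 1 : ℕ) : ℝ) / (L : ℝ) - q)
          linarith
        rw [lt_div_iff₀ hpR]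
        calc (L : ℝ) * (p : ℝ) < (L : ℝ) * (((n + 1 : ℕ) : ℝ) / (L : ℝ)) :=
          mul_lt_mul_of_pos_left h1 hLR
        _ = ((n + 1 : ℕ) : ℝ) := by field_simp
      have hfp : ⌊((n + 1 : ℕ) : ℝ) / (p : ℝ)⌋ = L := by
        have h1 : (L : ℤ) ≤ ⌊((n + 1 : ℕ) : ℝ) / (p : ℝ)⌋ := Int.le_floor.mpr hlower.le
        have h2' : ⌊((n + 1 : ℕ) : ℝ) / (p : ℝ)⌋ < L + 1 := by
          apply Int.floor_lt.mpr
          push_cast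
          push_cast at hupper
          linarith
        omega
      simp only [gfl, hfp, ← hL]

lemma st_agree_below {q : ℝ} (h0 : 0 < q) (h2 : q < 1 / 2) (hirr : Irrational q) (I : ℕ) :
    ∃ δ : ℝ, 0 < δ ∧ ∀ p : ℚ, q - δ < (p : ℝ) → (p : ℝ) < q →
      ∀ i ≤ I, gfl (p : ℝ) i = gfl q i := by
  induction I with
  | zero =>
    refine ⟨1, one_pos, fun p _ _ i hi => ?_⟩
    have h' : i = 0 := by omega
    rw [h', st_gfl_zero, st_gfl_zero]
  | succ n ih =>
    obtain ⟨δ, hδ, hI⟩ := ih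
    have hx0 : (0 : ℝ) < ((n + 1 : ℕ) : ℝ) := by positivity
    have hirr2 : Irrational (((n + 1 : ℕ) : ℝ) / q) := by
      have h1 : ((n + 1 : ℕ) : ℝ) / q = ((n + 1 : ℤ) : ℝ) * q⁻¹ := by push_cast; ring
      rw [h1]
      exact hirr.inv.intCast_mul (by positivity)
    set L : ℤ := ⌊((n + 1 : ℕ) : ℝ) / q⌋ with hL
    have hL0 : 0 ≤ L := by
      rw [hL]
      exact Int.floor_nonneg.mpr (by positivity)
    have hL1R : (0 : ℝ) < (L : ℝ) + 1 := by
      have : ((L : ℤ) : ℝ) ≥ 0 := by exact_mod_cast hL0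
      linarith
    have hle : (L : ℝ) ≤ ((n + 1 : ℕ) : ℝ) / q := by rw [hL]; exact Int.floor_le _
    have hlt : (L : ℝ) < ((n + 1 : ℕ) : ℝ) / q := by
      rcases lt_or_eq_of_le hle with h' | h'
      · exact h'
      · exact absurd ⟨(L : ℚ), by push_cast; push_cast at h'; exact h'⟩ hirr2
    have hflt := Int.lt_floor_add_one (((n + 1 : ℕ) : ℝ) / q)
    rw [← hL] at hflt
    have hq' : ((n + 1 : ℕ) : ℝ) / ((L : ℝ) + 1) < q := by
      rw [div_lt_iff₀ hL1R]
      calc ((n + 1 : ℕ) : ℝ) = (((n + 1 : ℕ) : ℝ) / q) * q := by field_simp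
        _ < ((L : ℝ) + 1) * q := mul_lt_mul_of_pos_right hflt h0
        _ = q * ((L : ℝ) + 1) := by ring
    refine ⟨min δ (q - ((n + 1 : ℕ) : ℝ) / ((L : ℝ) + 1)), lt_min hδ (by linarith), ?_⟩
    intro p hp1 hp2 i hi
    have hpR : (0 : ℝ) < (p : ℝ) := by
      have h1 := min_le_right δ (q - ((n + 1 : ℕ) : ℝ) / ((L : ℝ) + 1))
      have h2' : (0 : ℝ) < ((n + 1 : ℕ) : ℝ) / ((L : ℝ) + 1) := by positivity
      linarith
    rcases Nat.lt_succ_iff_lt_or_eq.mp (Nat.lt_succ_of_le hi) with h' | h'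
    · refine hI p ?_ hp2 i (by omega)
      have := min_le_left δ (q - ((n + 1 : ℕ) : ℝ) / ((L : ℝ) + 1))
      linarith
    · subst h'
      have hlower : (L : ℝ) < ((n + 1 : ℕ) : ℝ) / (p : ℝ) := by
        have h1 : ((n + 1 : ℕ) : ℝ) / q < ((n + 1 : ℕ) : ℝ) / (p : ℝ) :=
          div_lt_div_of_pos_left hx0 hpR hp2
        linarith
      have hupper : ((n + 1 : ℕ) : ℝ) / (p : ℝ) < (L : ℝ) + 1 := by
        have h1 : ((n + 1 : ℕ) : ℝ) / ((L : ℝ) + 1) < (p : ℝ) := by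
          have := min_le_right δ (q - ((n + 1 : ℕ) : ℝ) / ((L : ℝ) + 1))
          linarith
        rw [div_lt_iff₀ hpR]
        rw [div_lt_iff₀ hL1R] at h1
        calc ((n + 1 : ℕ) : ℝ) < (p : ℝ) * ((L : ℝ) + 1) := h1
          _ = ((L : ℝ) + 1) * (p : ℝ) := by ring
      have hfp : ⌊((n + 1 : ℕ) : ℝ) / (p : ℝ)⌋ = L := by
        have h1 : (L : ℤ) ≤ ⌊((n + 1 : ℕ) : ℝ) / (p : ℝ)⌋ := Int.le_floor.mpr hlower.le
        have h2' : ⌊((n + 1 : ℕ) : ℝ) / (p : ℝ)⌋ < L + 1 := by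
          apply Int.floor_lt.mpr
          push_cast
          push_cast at hupper
          linarith
        omega
      simp only [gfl, hfp, ← hL]

lemma st_num_large {q : ℝ} (h0 : 0 < q) (hirr : Irrational q) (K : ℕ) :
    ∃ δ : ℝ, 0 < δ ∧ ∀ p : ℚ, 0 < p → |(p : ℝ) - q| < δ → K ≤ p.num.toNat := by
  classical
  set D : ℕ := Nat.ceil (2 * (K : ℝ) / q) with hD
  set F : Finset ℚ := ((Finset.Icc (1 : ℤ) (K : ℤ)) ×ˢ (Finset.Icc (1 : ℕ) D)).image
      (fun ab => (ab.1 : ℚ) / (ab.2 : ℚ)) with hF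
  have Hmem : ∀ p : ℚ, 0 < p → |(p : ℝ) - q| < q / 2 → p.num.toNat < K → p ∈ F := by
    intro p hp hclose hsmall
    have hnum : 0 < p.num := Rat.num_pos.mpr hp
    have hnumK : p.num ≤ (K : ℤ) := by omega
    have hpq : q / 2 < (p : ℝ) := by
      have := abs_lt.mp hclose
      linarith [this.1]
    have hdenpos : 0 < p.den := p.pos
    have hdenD : p.den ≤ D := by
      have hcast : ((p.num.toNat : ℕ) : ℝ) = (p.num : ℝ) := by
        exact_mod_cast Int.toNat_of_nonneg hnum.le
      have h1 : (p.den : ℝ) = (p.num : ℝ) / (p : ℝ) := by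
        rw [Rat.cast_def]
        have hden : (0 : ℝ) < (p.den : ℝ) := by exact_mod_cast hdenpos
        have hnum' : (p.num : ℝ) ≠ 0 := by
          have : (0 : ℝ) < (p.num : ℝ) := by exact_mod_cast hnum
          positivity
        field_simp
      have h2 : (p.num : ℝ) ≤ (K : ℝ) := by exact_mod_cast hnumK
      have h3 : (p.den : ℝ) ≤ 2 * (K : ℝ) / q := by
        rw [h1]
        have hpR : (0 : ℝ) < (p : ℝ) := by exact_mod_cast hp
        rw [div_le_div_iff₀ hpR h0]
        have hKpos : (0 : ℝ) ≤ (K : ℝ) := by positivity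
        nlinarith
      have h4 : (p.den : ℝ) ≤ (D : ℝ) := le_trans h3 (Nat.le_ceil _)
      exact_mod_cast h4
    rw [hF]
    apply Finset.mem_image.mpr
    refine ⟨(p.num, p.den), ?_, ?_⟩
    · rw [Finset.mem_product]
      constructor
      · rw [Finset.mem_Icc]; omega
      · rw [Finset.mem_Icc]; omega
    · exact Rat.num_div_den p
  clear_value F
  rcases Finset.eq_empty_or_nonempty F with hFe | hFne
  · refine ⟨q / 2, by positivity, fun p hp hclose => ?_⟩
    by_contra hc
    have := Hmem p hp hclose (by omega)
    rw [hFe] at this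
    exact absurd this (Finset.notMem_empty p)
  · obtain ⟨δ2, hδ2pos, hδ2le⟩ : ∃ δ2 : ℝ, 0 < δ2 ∧ ∀ r ∈ F, δ2 ≤ |(r : ℝ) - q| := by
      have hGne : (F.image (fun r : ℚ => |(r : ℝ) - q|)).Nonempty := hFne.image _
      refine ⟨(F.image (fun r : ℚ => |(r : ℝ) - q|)).min' hGne, ?_, fun r hr =>
        Finset.min'_le _ _ (Finset.mem_image_of_mem (fun r : ℚ => |(r : ℝ) - q|) hr)⟩
      obtain ⟨r, hrF, hr⟩ := Finset.mem_image.mp (Finset.min'_mem _ hGne)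
      rw [← hr]
      have hneq : (r : ℝ) ≠ q := fun h => hirr ⟨r, h⟩
      exact abs_pos.mpr (sub_ne_zero.mpr hneq)
    refine ⟨min (q / 2) δ2, lt_min (by positivity) hδ2pos, fun p hp hclose => ?_⟩
    by_contra hc
    have hmemF := Hmem p hp (lt_of_lt_of_le hclose (min_le_left _ _)) (by omega)
    have h1 := hδ2le p hmemF
    have h2 := min_le_right (q / 2) δ2
    linarith

end Approx

section Height

/-- The defining set of `height`. -/
def stT (α : Bseq) : Set ℝ :=
  {x : ℝ | ∃ q : ℚ, x = (q : ℝ) ∧ 0 < q ∧ q ≤ 1 / 2 ∧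
    umLT (perSeq (cqWord (q : ℝ) q.num.toNat ++ [0])) α} ∪ {1 / 2}

lemma st_height_eq (α : Bseq) : height α = sInf (stT α) := rfl

lemma st_stT_bdd (α : Bseq) : BddBelow (stT α) := by
  refine ⟨0, ?_⟩
  rintro x (⟨p, rfl, hp, _, _⟩ | hx)
  · exact le_of_lt (st_rat_cast_pos hp)
  · rw [Set.mem_singleton_iff] at hx
    rw [hx]; norm_num

lemma st_stT_ne (α : Bseq) : (stT α).Nonempty := ⟨1 / 2, Or.inr rfl⟩

lemma st_stT_mem {α : Bseq} {p : ℚ} (hp : 0 < p) (hp2 : p ≤ 1 / 2)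
    (h : umLT (stBeta p) α) : ((p : ℝ)) ∈ stT α :=
  Or.inl ⟨p, rfl, hp, hp2, h⟩

lemma st_rat_le_half {p : ℚ} (h : (p : ℝ) ≤ 1 / 2) : p ≤ 1 / 2 := by
  rw [show (1 / 2 : ℝ) = ((1 / 2 : ℚ) : ℝ) by norm_num] at h
  exact_mod_cast h

lemma st_height_tail {q : ℝ} (h0 : 0 < q) (h2 : q < 1 / 2) (hirr : Irrational q) :
    height (tailSeq q 1) = q := by
  rw [st_height_eq]
  apply le_antisymm
  · by_contra hlt
    push_neg at hlt
    obtain ⟨p, hp1, hp2⟩ := exists_rat_btwn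
      (show q < min (sInf (stT (tailSeq q 1))) (1 / 2) from lt_min hlt h2)
    have hp2' : (p : ℝ) < sInf (stT (tailSeq q 1)) := lt_of_lt_of_le hp2 (min_le_left _ _)
    have hp3 : p ≤ 1 / 2 := st_rat_le_half (le_of_lt (lt_of_lt_of_le hp2 (min_le_right _ _)))
    have hp0 : 0 < p := by
      have : (0 : ℝ) < (p : ℝ) := lt_trans h0 hp1
      exact_mod_cast this
    have hcmp := st_cmp_above h0 h2 hp1 hp3
    exact absurd (csInf_le (st_stT_bdd _) (st_stT_mem hp0 hp3 hcmp)) (not_le.mpr hp2')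
  · apply le_csInf (st_stT_ne _)
    rintro x (⟨p, rfl, hp0, hp2', hcmp⟩ | hx)
    · by_contra hc
      push_neg at hc
      exact st_umLT_asymm (st_cmp_below h0 h2 hp0 hc) hcmp
    · rw [Set.mem_singleton_iff] at hx
      rw [hx]; linarith

lemma st_beta_agree {q : ℝ} (h0 : 0 < q) (h2 : q < 1 / 2) {p : ℚ} (hp : 0 < p)
    (hp2 : p ≤ 1 / 2) {I : ℕ} (hnum : I + 2 ≤ p.num.toNat)
    (hg : ∀ i ≤ I, gfl (p : ℝ) i = gfl q i)
    {k : ℕ} (hk : k + 2 ≤ gfl q I) : stBeta p k = tailSeq q 1 k := by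
  have hq2 : q ≤ 1 / 2 := h2.le
  have hpr := st_rat_cast_pos hp
  have hpr2 := st_rat_cast_half hp2
  have hgm := st_rat_gfl_den hp
  have hgIp : gfl (p : ℝ) I = gfl q I := hg I le_rfl
  have hkden : k + 2 ≤ p.den := by
    have h1 : gfl (p : ℝ) I + 2 ≤ gfl (p : ℝ) p.num.toNat := st_gfl_mono hpr hpr2 (by omega)
    omega
  apply st_eq_of_iff_one
  rw [st_beta_char hp hp2 k (by omega), st_tailSeq_char h0 hq2 k]
  constructor
  · rintro (h | h | ⟨i, hi1, him, hi⟩)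
    · exact Or.inl h
    · omega
    · rcases le_or_gt i I with hiI | hiI
      · exact Or.inr ⟨i, hi1, by rw [← hg i hiI]; exact hi⟩
      · exfalso
        have h1 : gfl (p : ℝ) I + 2 ≤ gfl (p : ℝ) i := st_gfl_mono hpr hpr2 hiI
        rcases hi with h' | h' <;> omega
  · rintro (h | ⟨t, ht1, ht⟩)
    · exact Or.inl h
    · rcases le_or_gt t I with htI | htI
      · exact Or.inr (Or.inr ⟨t, ht1, by omega, by rw [hg t htI]; exact ht⟩)
      · exfalso
        have h1 : gfl q I + 2 ≤ gfl q t := st_gfl_mono h0 hq2 htI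
        rcases ht with h' | h' <;> omega

lemma st_unique {q : ℝ} (h0 : 0 < q) (h2 : q < 1 / 2) (hirr : Irrational q)
    {α : Bseq} (hne : α ≠ tailSeq q 1) : height α ≠ q := by
  classical
  have hq2 : q ≤ 1 / 2 := h2.le
  have hdex : ∃ R, α R ≠ tailSeq q 1 R := by
    by_contra hc
    push_neg at hc
    exact hne (funext hc)
  set R := Nat.find hdex with hRdef
  have hRdiff : α R ≠ tailSeq q 1 R := Nat.find_spec hdex
  have hRmin : ∀ k, k < R → α k = tailSeq q 1 k := by
    intro k hk
    by_contra hc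
    have h1 : Nat.find hdex ≤ k := Nat.find_le hc
    omega
  set I0 := R + 2 with hI0
  have hgflI0 : R + 2 ≤ gfl q I0 := by
    have := st_gfl_ge h0 hq2 I0
    omega
  rcases Nat.even_or_odd (∑ k ∈ Finset.range (R + 1), ((α k : ℕ))) with hev | hodd
  · -- Case A : α ≺ α_q, show height α > q
    have hLT : umLT α (tailSeq q 1) := ⟨R, hRmin, hRdiff, hev⟩
    have hoddq : ¬ Even (∑ k ∈ Finset.range (R + 1), ((tailSeq q 1 k : ℕ))) := by
      intro hc
      exact st_parity_flip hRmin hRdiff (iff_of_true hev hc)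
    obtain ⟨δ1, hδ1, hA1⟩ := st_agree_above h0 h2 hirr I0
    obtain ⟨δ2, hδ2, hA2⟩ := st_num_large h0 hirr (I0 + 2)
    set ε := min (min δ1 δ2) (1 / 2 - q) with hε
    have hεpos : 0 < ε := lt_min (lt_min hδ1 hδ2) (by linarith)
    intro hh
    rw [st_height_eq] at hh
    have hlow : ∀ x ∈ stT α, q + ε ≤ x := by
      rintro x (⟨p, rfl, hp0, hp2', hcmp⟩ | hx)
      · by_contra hc
        push_neg at hc
        rcases le_or_gt ((p : ℝ)) q with hple | hplt
        · have hplt' : (p : ℝ) < q := lt_of_le_of_ne hple (fun h => hirr ⟨p, h⟩)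
          exact st_umLT_asymm (st_umLT_trans hLT (st_cmp_below h0 h2 hp0 hplt')) hcmp
        · have hb1 : (p : ℝ) < q + δ1 := by
            have := min_le_left δ1 δ2
            have := min_le_left (min δ1 δ2) (1 / 2 - q)
            linarith
          have hb2 : |(p : ℝ) - q| < δ2 := by
            rw [abs_lt]
            have h1 := min_le_right δ1 δ2
            have h2' := min_le_left (min δ1 δ2) (1 / 2 - q)
            constructor <;> linarith
          have hnum := hA2 p hp0 hb2
          have hg := hA1 p hplt hb1
          have hag : ∀ k, k ≤ R → stBeta p k = tailSeq q 1 k := by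
            intro k hk
            exact st_beta_agree h0 h2 hp0 hp2' hnum hg (by omega)
          have hp1' : ∀ k, k < R → stBeta p k = α k :=
            fun k hk => (hag k hk.le).trans (hRmin k hk).symm
          have hp2'' : stBeta p R ≠ α R := by
            rw [hag R le_rfl]
            exact Ne.symm hRdiff
          have heven := (st_umLT_iff_at hp1' hp2'').mp hcmp
          have hsum : ∑ k ∈ Finset.range (R + 1), ((stBeta p k : ℕ)) =
              ∑ k ∈ Finset.range (R + 1), ((tailSeq q 1 k : ℕ)) :=
            st_sum_agree (fun i hi => hag i (by omega))
          rw [hsum] at heven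
          exact hoddq heven
      · rw [Set.mem_singleton_iff] at hx
        rw [hx]
        have := min_le_right (min δ1 δ2) (1 / 2 - q)
        linarith
    have hge : q + ε ≤ sInf (stT α) := le_csInf (st_stT_ne _) hlow
    linarith [hge, hh.le, hh.ge]
  · -- Case B : α_q ≺ α, show height α < q
    have hevq : Even (∑ k ∈ Finset.range (R + 1), ((tailSeq q 1 k : ℕ))) := by
      by_contra hc
      rw [← Nat.not_even_iff_odd] at hodd
      exact st_parity_flip hRmin hRdiff (iff_of_false hodd hc)
    obtain ⟨δ1, hδ1, hA1⟩ := st_agree_below h0 h2 hirr I0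
    obtain ⟨δ2, hδ2, hA2⟩ := st_num_large h0 hirr (I0 + 2)
    set ε := min (min δ1 δ2) (q / 2) with hε
    have hεpos : 0 < ε := lt_min (lt_min hδ1 hδ2) (by linarith)
    obtain ⟨p, hp1, hp2⟩ := exists_rat_btwn (show q - ε < q by linarith)
    have hppos : (0 : ℝ) < (p : ℝ) := by
      have h1 := min_le_right (min δ1 δ2) (q / 2)
      linarith
    have hp0 : 0 < p := by exact_mod_cast hppos
    have hp2' : p ≤ 1 / 2 := st_rat_le_half (by linarith)
    have hb1 : q - δ1 < (p : ℝ) := by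
      have h1 := min_le_left δ1 δ2
      have h2' := min_le_left (min δ1 δ2) (q / 2)
      linarith
    have hb2 : |(p : ℝ) - q| < δ2 := by
      rw [abs_lt]
      have h1 := min_le_right δ1 δ2
      have h2' := min_le_left (min δ1 δ2) (q / 2)
      constructor <;> linarith
    have hnum := hA2 p hp0 hb2
    have hg := hA1 p hb1 hp2
    have hag : ∀ k, k ≤ R → stBeta p k = tailSeq q 1 k := by
      intro k hk
      exact st_beta_agree h0 h2 hp0 hp2' hnum hg (by omega)
    have humlt : umLT (stBeta p) α := by
      refine ⟨R, fun k hk => (hag k hk.le).trans (hRmin k hk).symm, ?_, ?_⟩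
      · rw [hag R le_rfl]
        exact Ne.symm hRdiff
      · rw [st_sum_agree (fun i hi => hag i (by omega))]
        exact hevq
    intro hh
    rw [st_height_eq] at hh
    have hle := csInf_le (st_stT_bdd α) (st_stT_mem hp0 hp2' humlt)
    rw [hh] at hle
    linarith

end Height

/-- For irrational `q ∈ (0,1/2)`, the sequence
`1 0^{κ_1(q)} 11 0^{κ_2(q)} 11 ⋯` is the unique element of `KS` of height `q`. -/
theorem stmt10 (q : ℝ) (h0 : 0 < q) (h2 : q < 1 / 2) (hirr : Irrational q) :
    KSseq (tailSeq q 1) ∧ height (tailSeq q 1) = q ∧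
    ∀ α : Bseq, KSseq α → height α = q → α = tailSeq q 1 := by
  refine ⟨⟨st_maximal h0 h2 hirr, st_alpha_zero h0 h2.le, st_alpha_one h0 h2.le⟩,
    st_height_tail h0 h2 hirr, ?_⟩
  intro α _ hh
  by_contra hne
  exact st_unique h0 h2 hirr hne hh
end
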